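/- arXiv:1810.03535 — 5 statements merged into one kernel-verified Lean document; each statement's English description precedes it below -/
import Mathlib

section
/- For every right-continuous nonincreasing probability density f on [0,1], the weighted square integral satisfies ∫₀¹ f(x)²·x dx ≤ 1/2. -/
open MeasureTheory Set Filter
open scoped ENNReal

/-- **Lemma 2.2.** For every right-continuous nonincreasing probability density `f` on `[0,1]`,
the weighted square integral satisfies `∫₀¹ f(x)² · x dx ≤ 1/2`. -/
theorem grenander_weighted_square_le_half
    (f : ℝ → ℝ)
    (hnn : ∀ x ∈ Ioc (0:ℝ) 1, 0 ≤ f x)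
    (hanti : AntitoneOn f (Ioc 0 1))
    (hrc : ∀ x ∈ Ioo (0:ℝ) 1, ContinuousWithinAt f (Ici x) x)
    (hint : IntegrableOn f (Ioc 0 1))
    (htot : ∫ x in Ioc (0:ℝ) 1, f x = 1) :
    ∫⁻ x in Ioc (0:ℝ) 1, ENNReal.ofReal ((f x) ^ 2 * x) ≤ 1 / 2 := by
  set μ := volume.restrict (Ioc (0:ℝ) 1) with hμdef
  set g : ℝ → ℝ≥0∞ := fun x => ENNReal.ofReal (f x) with hgdef
  have hgm : AEMeasurable g μ :=
    ENNReal.measurable_ofReal.comp_aemeasurable hint.1.aemeasurable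
  have hgtop : ∀ x, g x ≠ ⊤ := fun x => ENNReal.ofReal_ne_top
  -- total mass 1
  have hone : ∫⁻ x, g x ∂μ = 1 := by
    have h0 : 0 ≤ᵐ[μ] f := (ae_restrict_iff' measurableSet_Ioc).2 (ae_of_all _ hnn)
    have := MeasureTheory.ofReal_integral_eq_lintegral_ofReal hint h0
    rw [htot] at this
    simpa using this.symm
  -- pointwise bound:  f x ^ 2 * x ≤ f x * ∫_{(0,x]} f
  have key : ∀ x ∈ Ioc (0:ℝ) 1,
      ENNReal.ofReal (f x ^ 2 * x) ≤ g x * ∫⁻ y in Ioc (0:ℝ) x, g y := by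
    intro x hx
    have hfx : 0 ≤ f x := hnn x hx
    have h1 : f x ^ 2 * x = f x * (f x * x) := by ring
    rw [h1, ENNReal.ofReal_mul hfx]
    refine mul_le_mul_right ?_ _
    have hconst : ∫⁻ y in Ioc (0:ℝ) x, (ENNReal.ofReal (f x)) ∂volume
        ≤ ∫⁻ y in Ioc (0:ℝ) x, g y ∂volume := by
      refine setLIntegral_mono' measurableSet_Ioc ?_
      intro y hy
      exact ENNReal.ofReal_le_ofReal
        (hanti ⟨hy.1, hy.2.trans hx.2⟩ hx hy.2)
    calc ENNReal.ofReal (f x * x)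
        = ENNReal.ofReal (f x) * ENNReal.ofReal x := ENNReal.ofReal_mul hfx
      _ = ∫⁻ y in Ioc (0:ℝ) x, (ENNReal.ofReal (f x)) ∂volume := by
          rw [setLIntegral_const, Real.volume_Ioc, sub_zero]
      _ ≤ ∫⁻ y in Ioc (0:ℝ) x, g y ∂volume := hconst
  -- product measure setup
  set P := μ.prod μ with hPdef
  set H : ℝ × ℝ → ℝ≥0∞ := fun p => g p.1 * g p.2 with hHdef
  have hHm : AEMeasurable H P := (hgm.comp_fst (ν := μ)).mul (hgm.comp_snd (μ := μ))
  set S : Set (ℝ × ℝ) := {p : ℝ × ℝ | p.2 ≤ p.1} with hSdef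
  have hSm : MeasurableSet S := measurableSet_le measurable_snd measurable_fst
  set S' : Set (ℝ × ℝ) := {p : ℝ × ℝ | p.1 ≤ p.2} with hS'def
  have hS'm : MeasurableSet S' := measurableSet_le measurable_fst measurable_snd
  set Dg : Set (ℝ × ℝ) := {p : ℝ × ℝ | p.1 = p.2} with hDdef
  have hDm : MeasurableSet Dg := measurableSet_eq_fun measurable_fst measurable_snd
  have hFm : AEMeasurable (S.indicator H) P := hHm.indicator hSm
  have hGm : AEMeasurable (S'.indicator H) P := hHm.indicator hS'm
  -- the two halves are equal
  have hswap : ∫⁻ p, S'.indicator H p ∂P = ∫⁻ p, S.indicator H p ∂P := by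
    have hmapped : Measure.map Prod.swap P = P := Measure.prod_swap
    conv_lhs => rw [← hmapped]
    rw [lintegral_map' (by rw [hmapped]; exact hGm) measurable_swap.aemeasurable]
    refine lintegral_congr fun p => ?_
    by_cases h : p.2 ≤ p.1 <;>
      simp [Set.indicator_apply, hSdef, hS'def, hHdef, h, mul_comm]
  -- sum identity
  have hsum : ∀ p : ℝ × ℝ, S.indicator H p + S'.indicator H p
      = H p + Dg.indicator H p := by
    intro p
    rcases lt_trichotomy p.1 p.2 with h | h | h
    · simp [Set.indicator_apply, hSdef, hS'def, hDdef, h.le, h.ne, not_le.mpr h]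
    · simp [Set.indicator_apply, hSdef, hS'def, hDdef, h, le_of_eq h, le_of_eq h.symm]
    · simp [Set.indicator_apply, hSdef, hS'def, hDdef, h.le, h.ne', not_le.mpr h]
  -- full integral is 1
  have hHint : ∫⁻ p, H p ∂P = 1 := by
    rw [lintegral_prod _ hHm]
    simp only [hHdef]
    calc ∫⁻ x, ∫⁻ y, g x * g y ∂μ ∂μ
        = ∫⁻ x, g x * ∫⁻ y, g y ∂μ ∂μ := by
          refine lintegral_congr fun x => ?_
          rw [lintegral_const_mul' _ _ (hgtop x)]
      _ = 1 := by rw [hone]; simpa using hone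
  -- diagonal integral is 0
  have hDzero : ∫⁻ p, Dg.indicator H p ∂P = 0 := by
    rw [lintegral_indicator hDm _]
    refine setLIntegral_measure_zero _ _ ?_
    rw [Measure.prod_apply hDm]
    have : ∀ x, μ (Prod.mk x ⁻¹' Dg) = 0 := by
      intro x
      have : Prod.mk x ⁻¹' Dg = {x} := by
        ext y; simp [hDdef, eq_comm]
      rw [this]
      exact le_antisymm ((Measure.restrict_apply_le _ _).trans
        (by simp [Real.volume_singleton])) zero_le
    simp [this]
  -- hence each half is 1/2
  have hhalf : ∫⁻ p, S.indicator H p ∂P = 1 / 2 := by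
    have h2 : 2 * ∫⁻ p, S.indicator H p ∂P = 1 := by
      have : ∫⁻ p, S.indicator H p ∂P + ∫⁻ p, S'.indicator H p ∂P
          = ∫⁻ p, (H p + Dg.indicator H p) ∂P := by
        rw [← lintegral_add_left' hFm]
        exact lintegral_congr fun p => hsum p
      rw [lintegral_add_left' hHm, hHint, hDzero, add_zero, hswap] at this
      rw [two_mul, this]
    exact (ENNReal.eq_div_iff two_ne_zero ENNReal.ofNat_ne_top).2 h2
  -- identify the iterated integral
  have hiter : ∫⁻ x in Ioc (0:ℝ) 1, (g x * ∫⁻ y in Ioc (0:ℝ) x, g y)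
      = ∫⁻ p, S.indicator H p ∂P := by
    rw [lintegral_prod _ hFm]
    refine setLIntegral_congr_fun (μ := (volume : Measure ℝ)) measurableSet_Ioc (fun x hx => ?_)
    have hind : ∀ y : ℝ, S.indicator H (x, y) = (Iic x).indicator (fun y => g x * g y) y := by
      intro y
      by_cases h : y ≤ x <;>
        simp [Set.indicator_apply, hSdef, hHdef, h]
    calc (g x * ∫⁻ y in Ioc (0:ℝ) x, g y)
        = ∫⁻ y in Ioc (0:ℝ) x, g x * g y := by
          rw [lintegral_const_mul' _ _ (hgtop x)]
      _ = ∫⁻ y in Iic x, g x * g y ∂μ := by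
          rw [hμdef, Measure.restrict_restrict measurableSet_Iic]
          congr 1
          rw [Iic_inter_Ioc_of_le hx.2]
      _ = ∫⁻ y, S.indicator H (x, y) ∂μ := by
          rw [← lintegral_indicator measurableSet_Iic _]
          exact lintegral_congr fun y => (hind y).symm
  -- conclude
  calc ∫⁻ x in Ioc (0:ℝ) 1, ENNReal.ofReal ((f x) ^ 2 * x)
      ≤ ∫⁻ x in Ioc (0:ℝ) 1, (g x * ∫⁻ y in Ioc (0:ℝ) x, g y) := by
        exact setLIntegral_mono' (μ := (volume : Measure ℝ)) measurableSet_Ioc key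
    _ = 1 / 2 := by rw [hiter, hhalf]
end

section
/- Let f and g be right-continuous nonincreasing probability densities on [0,1] with cumulative distribution functions F(x) = ∫₀ˣ f(y) dy and G(x) = ∫₀ˣ g(y) dy (so F(0) = G(0) = 0 and F(1) = G(1) = 1). Then the weighted integrated square distance between the densities is controlled by the sup-distance between the distribution functions: ∫₀¹ (g(x−) − f(x−))²·x dx ≤ 2·sup_{0 ≤ x ≤ 1} |G(x) − F(x)|, where g(x−) and f(x−) denote left limits. -/
open MeasureTheory Set Filter Function
open Topology

namespace GrenanderAux

/-- CDF on `(0,1]`. -/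
noncomputable def cd (φ : ℝ → ℝ) (x : ℝ) : ℝ := ∫ y in Ioc (0:ℝ) x, φ y

/-- Generalized inverse of a nonincreasing density. -/
noncomputable def qf (φ : ℝ → ℝ) (s : ℝ) : ℝ := sSup {x | x ∈ Ioc (0:ℝ) 1 ∧ s < φ x}

lemma qf_bddAbove (φ : ℝ → ℝ) (s : ℝ) : BddAbove {x | x ∈ Ioc (0:ℝ) 1 ∧ s < φ x} :=
  ⟨1, fun _ hy => hy.1.2⟩

lemma qf_nonneg (φ : ℝ → ℝ) (s : ℝ) : 0 ≤ qf φ s := by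
  rcases eq_empty_or_nonempty {x | x ∈ Ioc (0:ℝ) 1 ∧ s < φ x} with h | h
  · rw [qf, h]; simp [Real.sSup_empty]
  · obtain ⟨x, hx⟩ := h
    exact le_trans hx.1.1.le (le_csSup (qf_bddAbove φ s) hx)

lemma qf_le_one (φ : ℝ → ℝ) (s : ℝ) : qf φ s ≤ 1 :=
  Real.sSup_le (fun _ hy => hy.1.2) zero_le_one

lemma qf_anti (φ : ℝ → ℝ) : Antitone (qf φ) := by
  intro s s' hss'
  refine Real.sSup_le (fun x hx => ?_) (qf_nonneg φ s)
  exact le_csSup (qf_bddAbove φ s) ⟨hx.1, lt_of_le_of_lt hss' hx.2⟩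

lemma lt_qf_iff (φ : ℝ → ℝ) (hanti : AntitoneOn φ (Ioc 0 1))
    (hrc : ∀ x ∈ Ioo (0:ℝ) 1, ContinuousWithinAt φ (Ici x) x)
    {s y : ℝ} (hs : φ 1 ≤ s) (hy : y ∈ Ioc (0:ℝ) 1) : y < qf φ s ↔ s < φ y := by
  constructor
  · intro h
    have hne : {x | x ∈ Ioc (0:ℝ) 1 ∧ s < φ x}.Nonempty := by
      by_contra hemp
      rw [not_nonempty_iff_eq_empty] at hemp
      rw [qf, hemp] at h
      simp only [Real.sSup_empty] at h
      linarith [hy.1]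
    obtain ⟨t, ht, hyt⟩ := exists_lt_of_lt_csSup hne h
    exact lt_of_lt_of_le ht.2 (hanti hy ht.1 hyt.le)
  · intro h
    have hy1 : y < 1 := by
      rcases lt_or_eq_of_le hy.2 with h' | h'
      · exact h'
      · exfalso; rw [h'] at h; linarith
    have hc := hrc y ⟨hy.1, hy1⟩
    have hev : φ ⁻¹' Ioi s ∈ 𝓝[Ici y] y := hc (Ioi_mem_nhds h)
    have hev2 : φ ⁻¹' Ioi s ∈ 𝓝[>] y := nhdsWithin_mono y Ioi_subset_Ici_self hev
    have hoo : Ioo y 1 ∈ 𝓝[>] y := Ioo_mem_nhdsGT_of_mem ⟨le_rfl, hy1⟩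
    obtain ⟨t, ht1, ht2⟩ := Filter.Eventually.exists (inter_mem hev2 hoo : _ ∈ 𝓝[>] y)
    have : t ∈ {x | x ∈ Ioc (0:ℝ) 1 ∧ s < φ x} :=
      ⟨⟨lt_trans hy.1 ht2.1, ht2.2.le⟩, ht1⟩
    exact lt_of_lt_of_le ht2.1 (le_csSup (qf_bddAbove φ s) this)

lemma qf_le_iff (φ : ℝ → ℝ) (hanti : AntitoneOn φ (Ioc 0 1))
    (hrc : ∀ x ∈ Ioo (0:ℝ) 1, ContinuousWithinAt φ (Ici x) x)
    {s y : ℝ} (hs : φ 1 ≤ s) (hy : y ∈ Ioc (0:ℝ) 1) : qf φ s ≤ y ↔ φ y ≤ s := by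
  rw [← not_lt, ← not_lt, lt_qf_iff φ hanti hrc hs hy]

lemma self_mul_le_cd (φ : ℝ → ℝ) (hanti : AntitoneOn φ (Ioc 0 1))
    (hint : IntegrableOn φ (Ioc 0 1)) {x : ℝ} (hx : x ∈ Ioc (0:ℝ) 1) :
    x * φ x ≤ cd φ x := by
  have h1 : ∫ _ in Ioc (0:ℝ) x, φ x = x * φ x := by
    simp [Real.volume_Ioc, ENNReal.toReal_ofReal hx.1.le, hx.1.le]
  rw [← h1]
  refine setIntegral_mono_on (integrableOn_const (ne_of_lt ?_))
    (hint.mono_set (Ioc_subset_Ioc_right hx.2)) measurableSet_Ioc (fun y hy => ?_)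
  · rw [Real.volume_Ioc]; exact ENNReal.ofReal_lt_top
  · exact hanti ⟨hy.1, hy.2.trans hx.2⟩ hx hy.2

lemma key (φ : ℝ → ℝ) (hanti : AntitoneOn φ (Ioc 0 1))
    (hrc : ∀ x ∈ Ioo (0:ℝ) 1, ContinuousWithinAt φ (Ici x) x)
    (hint : IntegrableOn φ (Ioc 0 1)) {x : ℝ} (hx : x ∈ Ioc (0:ℝ) 1) :
    IntegrableOn (fun s => if qf φ s ≤ x then qf φ s else 0) (Ici (φ 1)) ∧
      ∫ s in Ici (φ 1), (if qf φ s ≤ x then qf φ s else 0) = cd φ x - x * φ x := by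
  have hminv : Measurable (qf φ) := (qf_anti φ).measurable
  set β : ℝ → ℝ := fun s => if qf φ s ≤ x then qf φ s else 0 with hβdef
  have hβmeas : Measurable β :=
    Measurable.ite (measurableSet_le hminv measurable_const) hminv measurable_const
  have hβnn : ∀ s, 0 ≤ β s := fun s => by
    by_cases h : qf φ s ≤ x <;> simp [hβdef, h, qf_nonneg]
  set ν := volume.restrict (Ici (φ 1)) with hν
  set μΩ := volume.restrict (Ioc (0:ℝ) 1) with hμΩ
  set E : Set (ℝ × ℝ) := {p | p.2 < qf φ p.1 ∧ qf φ p.1 ≤ x} with hE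
  have hEmeas : MeasurableSet E :=
    (measurableSet_lt measurable_snd (hminv.comp measurable_fst)).inter
      (measurableSet_le (hminv.comp measurable_fst) measurable_const)
  -- first slicing
  have h1 : (ν.prod μΩ) E = ∫⁻ s, ENNReal.ofReal (β s) ∂ν := by
    rw [Measure.prod_apply hEmeas]
    apply lintegral_congr
    intro s
    have hpre : Prod.mk s ⁻¹' E = {y | y < qf φ s ∧ qf φ s ≤ x} := rfl
    rw [hpre]
    by_cases hc : qf φ s ≤ x
    · have : {y | y < qf φ s ∧ qf φ s ≤ x} = Iio (qf φ s) := by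
        ext y; simp [hc, Iio]
      rw [this, hμΩ, Measure.restrict_apply measurableSet_Iio]
      have : Iio (qf φ s) ∩ Ioc 0 1 = Ioo 0 (qf φ s) := by
        ext y
        constructor
        · rintro ⟨h1, h2, _⟩; exact ⟨h2, h1⟩
        · rintro ⟨h1, h2⟩
          exact ⟨h2, h1, le_trans h2.le (le_trans hc hx.2)⟩
      rw [this, Real.volume_Ioo, sub_zero, hβdef]
      simp [hc]
    · have : {y | y < qf φ s ∧ qf φ s ≤ x} = ∅ := by
        ext y; simp [hc]
      rw [this, hβdef]
      simp [hc]
  -- second slicing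
  have hslice : ∀ y ∈ Ioc (0:ℝ) 1,
      ν ((fun s => (s, y)) ⁻¹' E) = ENNReal.ofReal (φ y - φ x) := by
    intro y hy
    have hsl : (fun s => (s, y)) ⁻¹' E = {s | y < qf φ s ∧ qf φ s ≤ x} := rfl
    have hms : MeasurableSet {s : ℝ | y < qf φ s ∧ qf φ s ≤ x} :=
      (measurableSet_lt measurable_const hminv).inter (measurableSet_le hminv measurable_const)
    rw [hsl, hν, Measure.restrict_apply hms]
    have hφ1x : φ 1 ≤ φ x := hanti hx ⟨zero_lt_one, le_rfl⟩ hx.2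
    have hseteq : {s | y < qf φ s ∧ qf φ s ≤ x} ∩ Ici (φ 1) = Ico (φ x) (φ y) := by
      ext s
      constructor
      · rintro ⟨⟨h1, h2⟩, h3⟩
        exact ⟨(qf_le_iff φ hanti hrc h3 hx).1 h2, (lt_qf_iff φ hanti hrc h3 hy).1 h1⟩
      · rintro ⟨h1, h2⟩
        have h3 : φ 1 ≤ s := le_trans hφ1x h1
        exact ⟨⟨(lt_qf_iff φ hanti hrc h3 hy).2 h2, (qf_le_iff φ hanti hrc h3 hx).2 h1⟩, h3⟩
    rw [hseteq, Real.volume_Ico]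
  have h2 : (ν.prod μΩ) E = ∫⁻ y, ENNReal.ofReal (φ y - φ x) ∂μΩ := by
    rw [Measure.prod_apply_symm hEmeas, hμΩ]
    exact setLIntegral_congr_fun measurableSet_Ioc hslice
  -- computing the y-integral
  have h3 : ∫⁻ y, ENNReal.ofReal (φ y - φ x) ∂μΩ = ENNReal.ofReal (cd φ x - x * φ x) := by
    rw [hμΩ, ← Ioc_union_Ioc_eq_Ioc hx.1.le hx.2,
      lintegral_union measurableSet_Ioc (Set.Ioc_disjoint_Ioc_of_le le_rfl)]
    have hz : ∫⁻ y in Ioc x 1, ENNReal.ofReal (φ y - φ x) = 0 := by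
      have hzz : ∀ y ∈ Ioc x 1, ENNReal.ofReal (φ y - φ x) = 0 := by
        intro y hy
        have h' : φ y ≤ φ x := hanti hx ⟨lt_trans hx.1 hy.1, hy.2⟩ hy.1.le
        exact ENNReal.ofReal_eq_zero.2 (by linarith)
      rw [setLIntegral_congr_fun measurableSet_Ioc hzz, lintegral_zero]
    rw [hz, add_zero, ← ofReal_integral_eq_lintegral_ofReal]
    · congr 1
      have hci : IntegrableOn (fun _ : ℝ => φ x) (Ioc 0 x) := by
        refine integrableOn_const (ne_of_lt ?_)
        rw [Real.volume_Ioc]; exact ENNReal.ofReal_lt_top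
      rw [integral_sub (hint.mono_set (Ioc_subset_Ioc_right hx.2)) hci]
      have : ∫ _ in Ioc (0:ℝ) x, φ x = x * φ x := by
        simp [Real.volume_Ioc, ENNReal.toReal_ofReal hx.1.le, hx.1.le]
      rw [this]; rfl
    · exact (hint.mono_set (Ioc_subset_Ioc_right hx.2)).sub (by
        refine integrableOn_const (ne_of_lt ?_)
        rw [Real.volume_Ioc]; exact ENNReal.ofReal_lt_top)
    · refine (ae_restrict_mem measurableSet_Ioc).mono (fun y hy => ?_)
      have h' : φ x ≤ φ y := hanti ⟨hy.1, hy.2.trans hx.2⟩ hx hy.2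
      simp only [Pi.zero_apply]
      linarith
  have hmain : ∫⁻ s, ENNReal.ofReal (β s) ∂ν = ENNReal.ofReal (cd φ x - x * φ x) := by
    rw [← h1, h2, h3]
  have hβint : Integrable β ν := by
    refine ⟨hβmeas.aestronglyMeasurable, ?_⟩
    rw [hasFiniteIntegral_iff_ofReal (ae_of_all _ hβnn), hmain]
    exact ENNReal.ofReal_lt_top
  refine ⟨hβint, ?_⟩
  rw [integral_eq_lintegral_of_nonneg_ae (ae_of_all _ hβnn) hβmeas.aestronglyMeasurable, hmain,
    ENNReal.toReal_ofReal (sub_nonneg.2 (self_mul_le_cd φ hanti hint hx))]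

lemma U_bound (φ h Dc : ℝ → ℝ) {δ : ℝ}
    (hanti : AntitoneOn φ (Ioc 0 1))
    (hrc : ∀ x ∈ Ioo (0:ℝ) 1, ContinuousWithinAt φ (Ici x) x)
    (hint : IntegrableOn φ (Ioc 0 1))
    (hhint : IntegrableOn h (Ioc 0 1))
    (hDccont : Continuous Dc)
    (hDceq : ∀ a ∈ Icc (0:ℝ) 1, Dc a = ∫ y in Ioc (0:ℝ) a, h y)
    (hDc1 : Dc 1 = 0)
    (hδ : ∀ t, |Dc t| ≤ δ) :
    |∫ x in Ioc (0:ℝ) 1, h x * (cd φ x - x * φ x)| ≤ δ * (cd φ 1 - φ 1) := by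
  have hminv : Measurable (qf φ) := (qf_anti φ).measurable
  have h1Ioc : (1:ℝ) ∈ Ioc (0:ℝ) 1 := ⟨zero_lt_one, le_rfl⟩
  -- integrability of qf on Ici (φ 1)
  have hqf_eq : (fun s => if qf φ s ≤ (1:ℝ) then qf φ s else 0) = qf φ := by
    funext s; exact if_pos (qf_le_one φ s)
  have key1 := key φ hanti hrc hint h1Ioc
  have hqf_int : IntegrableOn (qf φ) (Ici (φ 1)) := by
    rw [← hqf_eq]; exact key1.1
  have hqf_total : ∫ s in Ici (φ 1), qf φ s = cd φ 1 - φ 1 := by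
    rw [← hqf_eq, key1.2]; ring
  -- step 1 : rewrite the inner factor via `key`
  have step1 : ∫ x in Ioc (0:ℝ) 1, h x * (cd φ x - x * φ x)
      = ∫ x in Ioc (0:ℝ) 1, ∫ s in Ici (φ 1), h x * (if qf φ s ≤ x then qf φ s else 0) := by
    refine setIntegral_congr_fun measurableSet_Ioc (fun x hx => ?_)
    rw [integral_const_mul, (key φ hanti hrc hint hx).2]
  -- Fubini
  set ν := volume.restrict (Ici (φ 1)) with hν
  set μΩ := volume.restrict (Ioc (0:ℝ) 1) with hμΩ
  have hΦm : AEStronglyMeasurable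
      (uncurry fun x s => h x * (if qf φ s ≤ x then qf φ s else 0)) (μΩ.prod ν) := by
    refine AEStronglyMeasurable.mul ?_ ?_
    · exact hhint.aestronglyMeasurable.comp_fst
    · refine Measurable.aestronglyMeasurable ?_
      exact Measurable.ite (measurableSet_le (hminv.comp measurable_snd) measurable_fst)
        (hminv.comp measurable_snd) measurable_const
  have hΦint : Integrable (uncurry fun x s => h x * (if qf φ s ≤ x then qf φ s else 0))
      (μΩ.prod ν) := by
    refine Integrable.mono' (hhint.abs.mul_prod hqf_int) hΦm (ae_of_all _ (fun p => ?_))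
    simp only [uncurry, Real.norm_eq_abs, abs_mul]
    by_cases hc : qf φ p.2 ≤ p.1
    · rw [if_pos hc, abs_of_nonneg (qf_nonneg φ p.2)]
    · rw [if_neg hc]
      simp [abs_nonneg, mul_nonneg (abs_nonneg _) (qf_nonneg φ p.2), qf_nonneg]
  have step2 : ∫ x, ∫ s, h x * (if qf φ s ≤ x then qf φ s else 0) ∂ν ∂μΩ
      = ∫ s, ∫ x, h x * (if qf φ s ≤ x then qf φ s else 0) ∂μΩ ∂ν :=
    integral_integral_swap hΦint
  -- inner integral computation
  have step3 : ∀ s : ℝ, ∫ x, h x * (if qf φ s ≤ x then qf φ s else 0) ∂μΩ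
      = qf φ s * (0 - Dc (qf φ s)) := by
    intro s
    set a := qf φ s with ha
    have ha0 : 0 ≤ a := qf_nonneg φ s
    have ha1 : a ≤ 1 := qf_le_one φ s
    have e1 : ∀ x : ℝ, h x * (if a ≤ x then a else 0) = a * ((Ici a).indicator h x) := by
      intro x
      by_cases hc : a ≤ x
      · rw [if_pos hc, indicator_of_mem (mem_Ici.2 hc)]; ring
      · rw [if_neg hc, indicator_of_notMem (fun hmem => hc (mem_Ici.1 hmem))]; ring
    calc ∫ x, h x * (if a ≤ x then a else 0) ∂μΩ
        = ∫ x, a * ((Ici a).indicator h x) ∂μΩ := by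
          exact integral_congr_ae (ae_of_all _ e1)
      _ = a * ∫ x in Ioc (0:ℝ) 1, (Ici a).indicator h x := by rw [integral_const_mul]
      _ = a * ∫ x in Ioc (0:ℝ) 1 ∩ Ici a, h x := by rw [setIntegral_indicator measurableSet_Ici]
      _ = a * ∫ x in Ioc a 1, h x := by
          congr 1
          apply setIntegral_congr_set
          rcases eq_or_lt_of_le ha0 with h0 | h0
          · rw [show Ioc (0:ℝ) 1 ∩ Ici a = Ioc a 1 from by
              rw [← h0]; exact inter_eq_left.2 (fun y hy => hy.1.le)]
            exact EventuallyEq.rfl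
          · have : Ioc (0:ℝ) 1 ∩ Ici a = Icc a 1 := by
              ext y
              simp only [mem_inter_iff, mem_Ioc, mem_Ici, mem_Icc]
              constructor
              · rintro ⟨⟨_, h2⟩, h3⟩; exact ⟨h3, h2⟩
              · rintro ⟨h1, h2⟩; exact ⟨⟨lt_of_lt_of_le h0 h1, h2⟩, h1⟩
            rw [this]
            exact (Ioc_ae_eq_Icc (α := ℝ) (μ := volume)).symm
      _ = a * (Dc 1 - Dc a) := by
          congr 1
          rw [hDceq 1 ⟨zero_le_one, le_rfl⟩, hDceq a ⟨ha0, ha1⟩, eq_sub_iff_add_eq, add_comm,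
            ← setIntegral_union (Set.Ioc_disjoint_Ioc_of_le le_rfl) measurableSet_Ioc
              (hhint.mono_set (Ioc_subset_Ioc_right ha1)) (hhint.mono_set (Ioc_subset_Ioc_left ha0)),
            Ioc_union_Ioc_eq_Ioc ha0 ha1]
      _ = a * (0 - Dc a) := by rw [hDc1]
  -- assemble and bound
  rw [step1]
  have : ∫ x in Ioc (0:ℝ) 1, ∫ s in Ici (φ 1), h x * (if qf φ s ≤ x then qf φ s else 0)
      = ∫ s in Ici (φ 1), qf φ s * (0 - Dc (qf φ s)) := by
    rw [show (volume.restrict (Ioc (0:ℝ) 1)) = μΩ from rfl] at *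
    rw [step2]
    exact integral_congr_ae (ae_of_all _ step3)
  rw [this]
  have hbound : ∀ s : ℝ, ‖qf φ s * (0 - Dc (qf φ s))‖ ≤ qf φ s * δ := by
    intro s
    rw [Real.norm_eq_abs, abs_mul, abs_of_nonneg (qf_nonneg φ s), zero_sub, abs_neg]
    exact mul_le_mul_of_nonneg_left (hδ _) (qf_nonneg φ s)
  calc |∫ s in Ici (φ 1), qf φ s * (0 - Dc (qf φ s))|
      ≤ ∫ s in Ici (φ 1), qf φ s * δ := by
        rw [← Real.norm_eq_abs]
        exact norm_integral_le_of_norm_le (hqf_int.mul_const δ) (ae_of_all _ hbound)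
    _ = δ * (cd φ 1 - φ 1) := by rw [integral_mul_const, hqf_total, mul_comm]

lemma J_zero (h : ℝ → ℝ) (hhint : IntegrableOn h (Ioc 0 1))
    (htot : ∫ x in Ioc (0:ℝ) 1, h x = 0) :
    ∫ x in Ioc (0:ℝ) 1, h x * ∫ y in Ioc (0:ℝ) x, h y = 0 := by
  set μΩ := volume.restrict (Ioc (0:ℝ) 1) with hμΩ
  set Φ : ℝ × ℝ → ℝ := {p : ℝ × ℝ | p.2 ≤ p.1}.indicator (fun p => h p.1 * h p.2) with hΦ
  set Φ' : ℝ × ℝ → ℝ := {p : ℝ × ℝ | p.1 ≤ p.2}.indicator (fun p => h p.1 * h p.2) with hΦ'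
  have hΦite : ∀ p : ℝ × ℝ, Φ p = if p.2 ≤ p.1 then h p.1 * h p.2 else 0 := by
    intro p; rw [hΦ, Set.indicator_apply]; simp only [Set.mem_setOf_eq]
  have hΦ'ite : ∀ p : ℝ × ℝ, Φ' p = if p.1 ≤ p.2 then h p.1 * h p.2 else 0 := by
    intro p; rw [hΦ', Set.indicator_apply]; simp only [Set.mem_setOf_eq]
  have hm : AEStronglyMeasurable (fun p : ℝ × ℝ => h p.1 * h p.2) (μΩ.prod μΩ) :=
    hhint.aestronglyMeasurable.comp_fst.mul hhint.aestronglyMeasurable.comp_snd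
  have hdom : Integrable (fun p : ℝ × ℝ => |h p.1| * |h p.2|) (μΩ.prod μΩ) :=
    hhint.abs.mul_prod hhint.abs
  have hΦm : AEStronglyMeasurable Φ (μΩ.prod μΩ) :=
    hm.indicator (measurableSet_le measurable_snd measurable_fst)
  have hΦ'm : AEStronglyMeasurable Φ' (μΩ.prod μΩ) :=
    hm.indicator (measurableSet_le measurable_fst measurable_snd)
  have habs : ∀ (p : ℝ × ℝ) (c : Prop) (_ : Decidable c),
      ‖if c then h p.1 * h p.2 else 0‖ ≤ |h p.1| * |h p.2| := by
    intro p c _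
    by_cases hc : c
    · rw [if_pos hc, Real.norm_eq_abs, abs_mul]
    · rw [if_neg hc, norm_zero]; positivity
  have hΦint : Integrable Φ (μΩ.prod μΩ) :=
    Integrable.mono' hdom hΦm (ae_of_all _ (fun p => by rw [hΦite p]; exact habs p _ _))
  have hΦ'int : Integrable Φ' (μΩ.prod μΩ) :=
    Integrable.mono' hdom hΦ'm (ae_of_all _ (fun p => by rw [hΦ'ite p]; exact habs p _ _))
  -- ∫ Φ = T
  have hT : ∫ p, Φ p ∂(μΩ.prod μΩ) = ∫ x in Ioc (0:ℝ) 1, h x * ∫ y in Ioc (0:ℝ) x, h y := by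
    rw [integral_prod _ hΦint]
    refine setIntegral_congr_fun measurableSet_Ioc (fun x hx => ?_)
    have hpt : ∀ y : ℝ, Φ (x, y) = (Iic x).indicator (fun y => h x * h y) y := by
      intro y
      rw [hΦite, Set.indicator_apply]; simp [mem_Iic]
    calc ∫ y, Φ (x, y) ∂μΩ = ∫ y in Ioc (0:ℝ) 1, (Iic x).indicator (fun y => h x * h y) y :=
          integral_congr_ae (ae_of_all _ hpt)
      _ = ∫ y in Ioc (0:ℝ) 1 ∩ Iic x, h x * h y := setIntegral_indicator measurableSet_Iic
      _ = ∫ y in Ioc (0:ℝ) x, h x * h y := by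
          rw [Ioc_inter_Iic, min_eq_right hx.2]
      _ = h x * ∫ y in Ioc (0:ℝ) x, h y := integral_const_mul _ _
  -- ∫ Φ' = ∫ Φ
  have hswap : ∫ p, Φ' p ∂(μΩ.prod μΩ) = ∫ p, Φ p ∂(μΩ.prod μΩ) := by
    have hpt : ∀ p : ℝ × ℝ, Φ' p.swap = Φ p := by
      intro p
      rw [hΦite, hΦ'ite]
      simp only [Prod.swap]
      by_cases hc : p.2 ≤ p.1
      · rw [if_pos hc, if_pos hc, mul_comm]
      · rw [if_neg hc, if_neg hc]
    rw [← integral_prod_swap Φ']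
    exact integral_congr_ae (ae_of_all _ hpt)
  -- diagonal is null
  have hdiagnull : (μΩ.prod μΩ) {p : ℝ × ℝ | p.1 = p.2} = 0 := by
    have hmeas : MeasurableSet {p : ℝ × ℝ | p.1 = p.2} :=
      measurableSet_eq_fun measurable_fst measurable_snd
    rw [Measure.prod_apply hmeas]
    have hsl : ∀ x : ℝ, μΩ (Prod.mk x ⁻¹' {p : ℝ × ℝ | p.1 = p.2}) = 0 := by
      intro x
      have : Prod.mk x ⁻¹' {p : ℝ × ℝ | p.1 = p.2} = {x} := by
        ext y; simp [eq_comm]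
      rw [this, hμΩ, Measure.restrict_apply (measurableSet_singleton x)]
      exact measure_mono_null inter_subset_left (measure_singleton x)
    simp only [hsl, lintegral_zero]
  set Ψ : ℝ × ℝ → ℝ := {p : ℝ × ℝ | p.1 = p.2}.indicator (fun p => h p.1 * h p.2) with hΨ
  have hΨite : ∀ p : ℝ × ℝ, Ψ p = if p.1 = p.2 then h p.1 * h p.2 else 0 := by
    intro p; rw [hΨ, Set.indicator_apply]; simp only [Set.mem_setOf_eq]
  have hdiag : ∫ p, Ψ p ∂(μΩ.prod μΩ) = 0 := by
    have hae : Ψ =ᵐ[μΩ.prod μΩ] (fun _ => (0:ℝ)) := by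
      have hnm : ∀ᵐ p ∂(μΩ.prod μΩ), p ∉ {p : ℝ × ℝ | p.1 = p.2} :=
        measure_eq_zero_iff_ae_notMem.1 hdiagnull
      exact hnm.mono (fun p hp => by rw [hΨite p, if_neg (show ¬(p.1 = p.2) from hp)])
    rw [integral_congr_ae hae, integral_zero]
  have hΨint : Integrable Ψ (μΩ.prod μΩ) := by
    refine Integrable.mono' hdom
      (hm.indicator (measurableSet_eq_fun measurable_fst measurable_snd))
      (ae_of_all _ (fun p => by rw [hΨite p]; exact habs p _ _))
  have hmul : Integrable (fun p : ℝ × ℝ => h p.1 * h p.2) (μΩ.prod μΩ) :=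
    Integrable.mono' hdom hm (ae_of_all _ (fun p => by rw [Real.norm_eq_abs, abs_mul]))
  have hsum : ∀ p : ℝ × ℝ, Φ p + Φ' p = h p.1 * h p.2 + Ψ p := by
    intro p
    rw [hΦite, hΦ'ite, hΨite]
    rcases lt_trichotomy p.1 p.2 with hlt | heq | hgt
    · rw [if_neg (not_le.2 hlt), if_pos hlt.le, if_neg hlt.ne] <;> try ring
    · rw [if_pos heq.ge, if_pos heq.le, if_pos heq] <;> try ring
    · rw [if_pos hgt.le, if_neg (not_le.2 hgt), if_neg hgt.ne'] <;> try ring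
  have htotsq : ∫ p, h p.1 * h p.2 ∂(μΩ.prod μΩ) = 0 := by
    rw [integral_prod_mul (μ := μΩ) (ν := μΩ) h h]
    rw [show ∫ x, h x ∂μΩ = 0 from htot]
    ring
  have hfinal : (∫ p, Φ p ∂(μΩ.prod μΩ)) + ∫ p, Φ' p ∂(μΩ.prod μΩ) = 0 := by
    rw [← integral_add hΦint hΦ'int]
    calc ∫ p, (Φ p + Φ' p) ∂(μΩ.prod μΩ)
        = ∫ p, (h p.1 * h p.2 + Ψ p) ∂(μΩ.prod μΩ) :=
          integral_congr_ae (ae_of_all _ hsum)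
      _ = 0 := by rw [integral_add hmul hΨint, htotsq, hdiag, add_zero]
  rw [← hT]
  rw [hswap] at hfinal
  linarith

lemma countable_bad (φ : ℝ → ℝ) (hanti : AntitoneOn φ (Ioc 0 1)) :
    Set.Countable {x | x ∈ Ioc (0:ℝ) 1 ∧ ¬ Tendsto φ (𝓝[<] x) (𝓝 (φ x))} := by
  set L : ℝ → ℝ := fun x => sInf (φ '' Ioo 0 x) with hL
  have hne : ∀ x ∈ Ioc (0:ℝ) 1, (Ioo (0:ℝ) x).Nonempty := fun x hx => ⟨x/2, by
    constructor <;> linarith [hx.1]⟩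
  have hsub : ∀ x ∈ Ioc (0:ℝ) 1, Ioo (0:ℝ) x ⊆ Ioc (0:ℝ) 1 := fun x hx y hy =>
    ⟨hy.1, le_trans hy.2.le hx.2⟩
  have hbdd : ∀ x ∈ Ioc (0:ℝ) 1, BddBelow (φ '' Ioo 0 x) := by
    rintro x hx
    refine ⟨φ x, ?_⟩
    rintro v ⟨t, ht, rfl⟩
    exact hanti (hsub x hx ht) hx ht.2.le
  have htendsto : ∀ x ∈ Ioc (0:ℝ) 1, Tendsto φ (𝓝[<] x) (𝓝 (L x)) := by
    intro x hx
    exact AntitoneOn.tendsto_nhdsWithin_Ioo_left (hne x hx)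
      (hanti.mono (hsub x hx)) (hbdd x hx)
  have hlow : ∀ x ∈ Ioc (0:ℝ) 1, φ x ≤ L x := by
    intro x hx
    refine le_csInf ((hne x hx).image φ) ?_
    rintro v ⟨t, ht, rfl⟩
    exact hanti (hsub x hx ht) hx ht.2.le
  have hbadlt : ∀ x, x ∈ Ioc (0:ℝ) 1 → ¬ Tendsto φ (𝓝[<] x) (𝓝 (φ x)) → φ x < L x := by
    intro x hx hbad
    rcases eq_or_lt_of_le (hlow x hx) with he | hlt
    · exact absurd (he ▸ htendsto x hx) hbad
    · exact hlt
  have hcover : {x | x ∈ Ioc (0:ℝ) 1 ∧ ¬ Tendsto φ (𝓝[<] x) (𝓝 (φ x))} ⊆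
      ⋃ q : ℚ, {x | x ∈ Ioc (0:ℝ) 1 ∧ φ x < q ∧ (q:ℝ) < L x} := by
    rintro x ⟨hx, hbad⟩
    obtain ⟨q, hq1, hq2⟩ := exists_rat_btwn (hbadlt x hx hbad)
    exact mem_iUnion.2 ⟨q, hx, hq1, hq2⟩
  refine Set.Countable.mono hcover (Set.countable_iUnion (fun q => ?_))
  refine Set.Subsingleton.countable ?_
  rintro x ⟨hx, hx1, hx2⟩ y ⟨hy, hy1, hy2⟩
  by_contra hxy
  rcases lt_or_gt_of_ne hxy with hlt | hgt
  · have : L y ≤ φ x := csInf_le (hbdd y hy) ⟨x, ⟨hx.1, hlt⟩, rfl⟩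
    linarith
  · have : L x ≤ φ y := csInf_le (hbdd x hx) ⟨y, ⟨hy.1, hgt⟩, rfl⟩
    linarith

lemma leftLim_ae (φ : ℝ → ℝ) (hanti : AntitoneOn φ (Ioc 0 1)) :
    ∀ᵐ x ∂(volume.restrict (Ioc (0:ℝ) 1)), leftLim φ x = φ x := by
  have hnull : volume {x | x ∈ Ioc (0:ℝ) 1 ∧ ¬ Tendsto φ (𝓝[<] x) (𝓝 (φ x))} = 0 :=
    (countable_bad φ hanti).measure_zero _
  have h1 : ∀ᵐ x ∂(volume.restrict (Ioc (0:ℝ) 1)),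
      x ∉ {x | x ∈ Ioc (0:ℝ) 1 ∧ ¬ Tendsto φ (𝓝[<] x) (𝓝 (φ x))} :=
    ae_restrict_of_ae (measure_eq_zero_iff_ae_notMem.1 hnull)
  have h2 : ∀ᵐ x ∂(volume.restrict (Ioc (0:ℝ) 1)), x ∈ Ioc (0:ℝ) 1 :=
    ae_restrict_mem measurableSet_Ioc
  filter_upwards [h1, h2] with x hx1 hx2
  have htd : Tendsto φ (𝓝[<] x) (𝓝 (φ x)) := by
    by_contra hc
    exact hx1 ⟨hx2, hc⟩
  exact leftLim_eq_of_tendsto htd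

end GrenanderAux

open GrenanderAux

/-- **Inequality (2.18).** For two right-continuous nonincreasing probability densities `f`, `g`
on `[0,1]` with CDFs `F`, `G`, the weighted integrated square distance between the (left-limit
versions of the) densities is bounded by twice the sup-distance of the CDFs:
`∫₀¹ (g(x−) − f(x−))²·x dx ≤ 2·sup_{0≤x≤1} |G(x) − F(x)|`. -/
theorem grenander_weighted_L2_le_sup_cdf
    (f g F G : ℝ → ℝ)
    (hfnn : ∀ x ∈ Ioc (0:ℝ) 1, 0 ≤ f x)
    (hfanti : AntitoneOn f (Ioc 0 1))
    (hfrc : ∀ x ∈ Ioo (0:ℝ) 1, ContinuousWithinAt f (Ici x) x)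
    (hfint : IntegrableOn f (Ioc 0 1))
    (hftot : ∫ x in Ioc (0:ℝ) 1, f x = 1)
    (hgnn : ∀ x ∈ Ioc (0:ℝ) 1, 0 ≤ g x)
    (hganti : AntitoneOn g (Ioc 0 1))
    (hgrc : ∀ x ∈ Ioo (0:ℝ) 1, ContinuousWithinAt g (Ici x) x)
    (hgint : IntegrableOn g (Ioc 0 1))
    (hgtot : ∫ x in Ioc (0:ℝ) 1, g x = 1)
    (hF : ∀ x, F x = ∫ y in (0:ℝ)..x, f y)
    (hG : ∀ x, G x = ∫ y in (0:ℝ)..x, g y) :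
    ∫⁻ x in Ioc (0:ℝ) 1, ENNReal.ofReal ((leftLim g x - leftLim f x) ^ 2 * x)
      ≤ ENNReal.ofReal (2 * ⨆ x : Icc (0:ℝ) 1, |G x.1 - F x.1|) := by
  set h : ℝ → ℝ := fun x => g x - f x with hh
  have hhint : IntegrableOn h (Ioc (0:ℝ) 1) := hgint.sub hfint
  have hhtot : ∫ x in Ioc (0:ℝ) 1, h x = 0 := by
    have : ∫ x in Ioc (0:ℝ) 1, (g x - f x) = 0 := by
      rw [integral_sub hgint hfint, hgtot, hftot, sub_self]
    exact this
  -- identification of F, G with `cd`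
  have hFcd : ∀ t ∈ Icc (0:ℝ) 1, F t = cd f t := fun t ht => by
    rw [hF t, intervalIntegral.integral_of_le ht.1]; rfl
  have hGcd : ∀ t ∈ Icc (0:ℝ) 1, G t = cd g t := fun t ht => by
    rw [hG t, intervalIntegral.integral_of_le ht.1]; rfl
  have hcdf1 : cd f 1 = 1 := hftot
  have hcdg1 : cd g 1 = 1 := hgtot
  -- basic bounds on cd
  have hcd_mem : ∀ (φ : ℝ → ℝ), (∀ x ∈ Ioc (0:ℝ) 1, 0 ≤ φ x) → IntegrableOn φ (Ioc 0 1) →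
      ∀ t ∈ Icc (0:ℝ) 1, 0 ≤ cd φ t ∧ cd φ t ≤ cd φ 1 := by
    intro φ hnn hint t ht
    constructor
    · refine setIntegral_nonneg measurableSet_Ioc (fun y hy => hnn y ⟨hy.1, hy.2.trans ht.2⟩)
    · refine setIntegral_mono_set hint ?_ (HasSubset.Subset.eventuallyLE (Ioc_subset_Ioc_right ht.2))
      refine (ae_restrict_mem measurableSet_Ioc).mono (fun y hy => hnn y hy)
  -- the sup distance
  set δ : ℝ := ⨆ x : Icc (0:ℝ) 1, |G x.1 - F x.1| with hδdef
  have hbddA : BddAbove (range fun x : Icc (0:ℝ) 1 => |G x.1 - F x.1|) := by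
    refine ⟨2, ?_⟩
    rintro v ⟨⟨t, ht⟩, rfl⟩
    show |G t - F t| ≤ 2
    have h1 := hcd_mem f hfnn hfint t ht
    have h2 := hcd_mem g hgnn hgint t ht
    have h1' : cd f t ≤ 1 := hcdf1 ▸ h1.2
    have h2' : cd g t ≤ 1 := hcdg1 ▸ h2.2
    rw [hFcd t ht, hGcd t ht, abs_le]
    constructor <;> linarith [h1.1, h2.1]
  have hδ_ge : ∀ t ∈ Icc (0:ℝ) 1, |G t - F t| ≤ δ := by
    intro t ht
    exact le_ciSup hbddA (⟨t, ht⟩ : Icc (0:ℝ) 1)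
  have hδ0 : 0 ≤ δ := le_trans (abs_nonneg _) (hδ_ge 0 ⟨le_rfl, zero_le_one⟩)
  -- the clamped primitive of h
  have hhicc : IntegrableOn h (Icc (0:ℝ) 1) := by
    rwa [integrableOn_Icc_iff_integrableOn_Ioc]
  set cl : ℝ → ℝ := fun t => max 0 (min 1 t) with hcl
  have hclcont : Continuous cl := continuous_const.max (continuous_const.min continuous_id)
  have hclmem : ∀ t, cl t ∈ Icc (0:ℝ) 1 := fun t =>
    ⟨le_max_left _ _, max_le zero_le_one (min_le_left _ _)⟩
  have hclid : ∀ t ∈ Icc (0:ℝ) 1, cl t = t := fun t ht => by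
    rw [hcl]; simp only [min_eq_right ht.2, max_eq_right ht.1]
  set Dc : ℝ → ℝ := fun t => ∫ y in Ioc (0:ℝ) (cl t), h y with hDc
  have hprim : ContinuousOn (fun t => ∫ y in Ioc (0:ℝ) t, h y) (Icc (0:ℝ) 1) :=
    intervalIntegral.continuousOn_primitive hhicc
  have hDccont : Continuous Dc := hprim.comp_continuous hclcont hclmem
  have hDceq : ∀ a ∈ Icc (0:ℝ) 1, Dc a = ∫ y in Ioc (0:ℝ) a, h y := fun a ha => by
    rw [hDc]; simp only [hclid a ha]
  have hDceq' : ∀ a ∈ Icc (0:ℝ) 1, Dc a = cd g a - cd f a := fun a ha => by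
    rw [hDceq a ha, hh]
    exact integral_sub (hgint.mono_set (Ioc_subset_Ioc_right ha.2))
      (hfint.mono_set (Ioc_subset_Ioc_right ha.2))
  have hDc1 : Dc 1 = 0 := by
    rw [hDceq 1 ⟨zero_le_one, le_rfl⟩, hhtot]
  have hDcbound : ∀ t, |Dc t| ≤ δ := by
    intro t
    have hmem := hclmem t
    have : Dc t = Dc (cl t) := by
      show (∫ y in Ioc (0:ℝ) (cl t), h y) = ∫ y in Ioc (0:ℝ) (cl (cl t)), h y
      rw [hclid (cl t) (hclmem t)]
    rw [this, hDceq' (cl t) hmem, ← hGcd (cl t) hmem, ← hFcd (cl t) hmem]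
    exact hδ_ge (cl t) hmem
  -- the U-bounds
  have hUf : |∫ x in Ioc (0:ℝ) 1, h x * (cd f x - x * f x)| ≤ δ :=
    calc |∫ x in Ioc (0:ℝ) 1, h x * (cd f x - x * f x)| ≤ δ * (cd f 1 - f 1) :=
          U_bound f h Dc hfanti hfrc hfint hhint hDccont hDceq hDc1 hDcbound
      _ ≤ δ * 1 := by
          have hf1 : 0 ≤ f 1 := hfnn 1 ⟨zero_lt_one, le_rfl⟩
          exact mul_le_mul_of_nonneg_left (by rw [hcdf1]; linarith) hδ0
      _ = δ := mul_one δ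
  have hUg : |∫ x in Ioc (0:ℝ) 1, h x * (cd g x - x * g x)| ≤ δ :=
    calc |∫ x in Ioc (0:ℝ) 1, h x * (cd g x - x * g x)| ≤ δ * (cd g 1 - g 1) :=
          U_bound g h Dc hganti hgrc hgint hhint hDccont hDceq hDc1 hDcbound
      _ ≤ δ * 1 := by
          have hg1 : 0 ≤ g 1 := hgnn 1 ⟨zero_lt_one, le_rfl⟩
          exact mul_le_mul_of_nonneg_left (by rw [hcdg1]; linarith) hδ0
      _ = δ := mul_one δ
  -- integrability of the three pieces and of W
  have hDcm : AEStronglyMeasurable Dc (volume.restrict (Ioc (0:ℝ) 1)) :=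
    hDccont.aestronglyMeasurable
  have hA_int : IntegrableOn (fun x => h x * Dc x) (Ioc (0:ℝ) 1) := by
    refine Integrable.mono' (hhint.abs.mul_const δ) (hhint.aestronglyMeasurable.mul hDcm)
      (ae_of_all _ (fun x => ?_))
    rw [Real.norm_eq_abs, abs_mul]
    exact mul_le_mul_of_nonneg_left (hDcbound x) (abs_nonneg _)
  have hcdaesm : ∀ (φ : ℝ → ℝ), IntegrableOn φ (Ioc (0:ℝ) 1) →
      AEStronglyMeasurable (cd φ) (volume.restrict (Ioc (0:ℝ) 1)) := by
    intro φ hint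
    have hicc : IntegrableOn φ (Icc (0:ℝ) 1) := by rwa [integrableOn_Icc_iff_integrableOn_Ioc]
    have h2 : AEStronglyMeasurable (cd φ) (volume.restrict (Icc (0:ℝ) 1)) :=
      (intervalIntegral.continuousOn_primitive hicc).aestronglyMeasurable measurableSet_Icc
    exact h2.mono_measure (Measure.restrict_mono Ioc_subset_Icc_self le_rfl)
  have hBC_int : ∀ (φ : ℝ → ℝ), (∀ x ∈ Ioc (0:ℝ) 1, 0 ≤ φ x) → IntegrableOn φ (Ioc 0 1) →
      cd φ 1 = 1 → AntitoneOn φ (Ioc 0 1) →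
      IntegrableOn (fun x => h x * (cd φ x - x * φ x)) (Ioc (0:ℝ) 1) := by
    intro φ hnn hint hcd1 hanti
    refine Integrable.mono' (hhint.abs.mul_const 1)
      (hhint.aestronglyMeasurable.mul ((hcdaesm φ hint).sub
        (aestronglyMeasurable_id.mul hint.aestronglyMeasurable)))
      (((ae_restrict_mem measurableSet_Ioc).mono (fun x hx => ?_)))
    rw [Real.norm_eq_abs, abs_mul]
    refine mul_le_mul_of_nonneg_left ?_ (abs_nonneg _)
    have h1 : x * φ x ≤ cd φ x := self_mul_le_cd φ hanti hint hx
    have h2 : 0 ≤ x * φ x := mul_nonneg hx.1.le (hnn x hx)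
    have h3 : cd φ x ≤ 1 := hcd1 ▸ (hcd_mem φ hnn hint x ⟨hx.1.le, hx.2⟩).2
    rw [abs_of_nonneg (by linarith)]
    linarith
  have hB_int := hBC_int f hfnn hfint hcdf1 hfanti
  have hC_int := hBC_int g hgnn hgint hcdg1 hganti
  set W : ℝ → ℝ := fun x => (g x - f x) ^ 2 * x with hW
  -- integral identities
  have hsplit : ∫ x in Ioc (0:ℝ) 1, W x
      = (∫ x in Ioc (0:ℝ) 1, h x * Dc x)
        + ((∫ x in Ioc (0:ℝ) 1, h x * (cd f x - x * f x))
          - (∫ x in Ioc (0:ℝ) 1, h x * (cd g x - x * g x))) := by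
    have hBC : IntegrableOn
        (fun x => h x * (cd f x - x * f x) - h x * (cd g x - x * g x)) (Ioc (0:ℝ) 1) :=
      hB_int.sub hC_int
    have e1 : ∫ x in Ioc (0:ℝ) 1, W x = ∫ x in Ioc (0:ℝ) 1,
        (h x * Dc x + (h x * (cd f x - x * f x) - h x * (cd g x - x * g x))) := by
      refine setIntegral_congr_fun measurableSet_Ioc (fun x hx => ?_)
      have hDx : Dc x = cd g x - cd f x := hDceq' x ⟨hx.1.le, hx.2⟩
      show W x = h x * Dc x + (h x * (cd f x - x * f x) - h x * (cd g x - x * g x))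
      rw [hW, hh, hDx]
      ring
    rw [e1, integral_add hA_int hBC, integral_sub hB_int hC_int]
  have hA0 : ∫ x in Ioc (0:ℝ) 1, h x * Dc x = 0 := by
    have : ∫ x in Ioc (0:ℝ) 1, h x * Dc x
        = ∫ x in Ioc (0:ℝ) 1, h x * ∫ y in Ioc (0:ℝ) x, h y := by
      refine setIntegral_congr_fun measurableSet_Ioc (fun x hx => ?_)
      rw [hDceq x ⟨hx.1.le, hx.2⟩]
    rw [this]
    exact J_zero h hhint hhtot
  have hWint : IntegrableOn W (Ioc (0:ℝ) 1) := by
    have hdom : IntegrableOn (fun x => 2 * (f x + g x)) (Ioc (0:ℝ) 1) :=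
      ((hfint.add hgint).const_mul 2)
    refine Integrable.mono' hdom ?_ (((ae_restrict_mem measurableSet_Ioc).mono (fun x hx => ?_)))
    · have h1 : AEMeasurable (fun x : ℝ => g x - f x) (volume.restrict (Ioc (0:ℝ) 1)) :=
        hgint.aemeasurable.sub hfint.aemeasurable
      refine ((h1.mul h1).mul aemeasurable_id).aestronglyMeasurable.congr
        (ae_of_all _ (fun x => ?_))
      show (g x - f x) * (g x - f x) * id x = W x
      rw [hW, id_eq]
      ring
    · have hfx := hfnn x hx
      have hgx := hgnn x hx
      have habs : |g x - f x| ≤ f x + g x := by rw [abs_le]; constructor <;> linarith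
      have hx1 : x * f x ≤ 1 := le_trans (self_mul_le_cd f hfanti hfint hx)
        (hcdf1 ▸ (hcd_mem f hfnn hfint x ⟨hx.1.le, hx.2⟩).2)
      have hx2 : x * g x ≤ 1 := le_trans (self_mul_le_cd g hganti hgint hx)
        (hcdg1 ▸ (hcd_mem g hgnn hgint x ⟨hx.1.le, hx.2⟩).2)
      have hxfg : x * (f x + g x) ≤ 2 := by rw [mul_add]; linarith
      have hWx : ‖W x‖ = |g x - f x| * (x * |g x - f x|) := by
        have e : W x = (g x - f x) ^ 2 * x := rfl
        rw [e, Real.norm_eq_abs, abs_of_nonneg (mul_nonneg (sq_nonneg _) hx.1.le), ← sq_abs]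
        ring
      rw [hWx]
      calc |g x - f x| * (x * |g x - f x|) ≤ (f x + g x) * (x * (f x + g x)) := by
            refine mul_le_mul habs (mul_le_mul_of_nonneg_left habs hx.1.le)
              (mul_nonneg hx.1.le (abs_nonneg _)) (by linarith)
        _ ≤ (f x + g x) * 2 := mul_le_mul_of_nonneg_left hxfg (by linarith)
        _ = 2 * (f x + g x) := by ring
  have hWle : ∫ x in Ioc (0:ℝ) 1, W x ≤ 2 * δ := by
    rw [hsplit, hA0, zero_add]
    have h1 : ∫ x in Ioc (0:ℝ) 1, h x * (cd f x - x * f x) ≤ δ := le_trans (le_abs_self _) hUf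
    have h2 : -δ ≤ ∫ x in Ioc (0:ℝ) 1, h x * (cd g x - x * g x) := neg_le_of_abs_le hUg
    linarith
  -- final conversion
  have hcongr : ∫⁻ x in Ioc (0:ℝ) 1, ENNReal.ofReal ((leftLim g x - leftLim f x) ^ 2 * x)
      = ∫⁻ x in Ioc (0:ℝ) 1, ENNReal.ofReal (W x) := by
    refine lintegral_congr_ae ?_
    filter_upwards [leftLim_ae g hganti, leftLim_ae f hfanti] with x hxg hxf
    rw [hxg, hxf, hW]
  have hWnn : 0 ≤ᵐ[volume.restrict (Ioc (0:ℝ) 1)] W :=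
    (ae_restrict_mem measurableSet_Ioc).mono (fun x hx => by
      show (0:ℝ) ≤ W x
      have e : W x = (g x - f x) ^ 2 * x := rfl
      rw [e]
      exact mul_nonneg (sq_nonneg _) hx.1.le)
  rw [hcongr, ← ofReal_integral_eq_lintegral_ofReal hWint hWnn]
  exact ENNReal.ofReal_le_ofReal (by rw [hδdef] at hWle; exact hWle)
end

section
/- Let f and g be right-continuous nonincreasing probability densities on [0,1] with cumulative distribution functions F and G, set Ĝ = G − F and ĝ = g − f, and fix δ ∈ (0,1). Then |∫_δ¹ x·Ĝ(x) dĝ(x)| ≤ sup_{0 ≤ x ≤ 1} |Ĝ(x)| · [ δ·(g(δ) + f(δ)) + ∫_δ¹ (g(x) + f(x)) dx ], where dĝ is the signed Lebesgue–Stieltjes measure of ĝ on [δ,1]. -/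
open MeasureTheory Set Filter Function
open scoped ENNReal

lemma key_lintegral (f : ℝ → ℝ) (δ : ℝ) (hδ0 : 0 < δ) (hδ1 : δ < 1)
    (hfnn : ∀ x ∈ Ioc (0:ℝ) 1, 0 ≤ f x)
    (hfint : IntegrableOn f (Ioc δ 1))
    (μ : Measure ℝ)
    (hμ : ∀ a b : ℝ, δ ≤ a → a ≤ b → b ≤ 1 → μ (Ioc a b) = ENNReal.ofReal (f a - f b)) :
    ∫⁻ x in Ioc δ 1, ENNReal.ofReal x ∂μ
      ≤ ENNReal.ofReal (δ * f δ + ∫ x in Ioc δ 1, f x) := by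
  have hf1 : 0 ≤ f 1 := hfnn 1 ⟨one_pos, le_rfl⟩
  have hfδ : 0 ≤ f δ := hfnn δ ⟨hδ0, hδ1.le⟩
  have hfin : μ (Ioc δ 1) ≠ ⊤ := by
    rw [hμ δ 1 le_rfl hδ1.le le_rfl]; exact ENNReal.ofReal_ne_top
  haveI : IsFiniteMeasure (μ.restrict (Ioc δ 1)) :=
    ⟨by rw [Measure.restrict_apply_univ]; exact lt_top_iff_ne_top.2 hfin⟩
  have hintnn : 0 ≤ ∫ x in Ioc δ 1, f x :=
    setIntegral_nonneg measurableSet_Ioc fun x hx => hfnn x ⟨hδ0.trans hx.1, hx.2⟩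
  -- split
  have h1 : ∫⁻ x in Ioc δ 1, ENNReal.ofReal x ∂μ
      = ∫⁻ x in Ioc δ 1, (ENNReal.ofReal δ + ENNReal.ofReal (x - δ)) ∂μ := by
    apply setLIntegral_congr_fun measurableSet_Ioc
    intro x hx
    beta_reduce
    rw [← ENNReal.ofReal_add hδ0.le (by linarith [hx.1])]
    congr 1; ring
  rw [h1, lintegral_add_left measurable_const]
  -- constant part
  have hc : ∫⁻ _x in Ioc δ 1, ENNReal.ofReal δ ∂μ ≤ ENNReal.ofReal (δ * f δ) := by
    rw [lintegral_const, Measure.restrict_apply_univ, hμ δ 1 le_rfl hδ1.le le_rfl,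
      ← ENNReal.ofReal_mul hδ0.le]
    exact ENNReal.ofReal_le_ofReal (by nlinarith)
  -- variable part via Fubini
  have h2 : ∫⁻ x in Ioc δ 1, ENNReal.ofReal (x - δ) ∂μ
      ≤ ∫⁻ s in Ioc δ 1, ENNReal.ofReal (f s) := by
    have hker : ∀ x ∈ Ioc δ 1, ENNReal.ofReal (x - δ)
        = ∫⁻ s in Ioc δ 1, (Iio x).indicator (fun _ => (1:ℝ≥0∞)) s := by
      intro x hx
      rw [lintegral_indicator measurableSet_Iio, Measure.restrict_restrict measurableSet_Iio]
      have hset : Iio x ∩ Ioc δ 1 = Ioo δ x := by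
        ext s
        constructor
        · rintro ⟨h1, h2, h3⟩; exact ⟨h2, h1⟩
        · rintro ⟨h1, h2⟩; exact ⟨h2, h1, le_trans h2.le hx.2⟩
      rw [hset, setLIntegral_one, Real.volume_Ioo]
    have hswap : ∫⁻ x in Ioc δ 1, ∫⁻ s in Ioc δ 1,
          (Iio x).indicator (fun _ => (1:ℝ≥0∞)) s ∂volume ∂μ
        = ∫⁻ s in Ioc δ 1, ∫⁻ x in Ioc δ 1,
          (Iio x).indicator (fun _ => (1:ℝ≥0∞)) s ∂μ ∂volume := by
      apply lintegral_lintegral_swap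
      have : (uncurry fun (x s : ℝ) => (Iio x).indicator (fun _ => (1:ℝ≥0∞)) s)
          = {p : ℝ × ℝ | p.2 < p.1}.indicator (fun _ => (1:ℝ≥0∞)) := by
        funext p
        simp [uncurry, Set.indicator_apply]
      rw [this]
      exact (Measurable.indicator measurable_const
        (measurableSet_lt measurable_snd measurable_fst)).aemeasurable
    calc ∫⁻ x in Ioc δ 1, ENNReal.ofReal (x - δ) ∂μ
        = ∫⁻ x in Ioc δ 1, ∫⁻ s in Ioc δ 1,
            (Iio x).indicator (fun _ => (1:ℝ≥0∞)) s ∂volume ∂μ :=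
          setLIntegral_congr_fun measurableSet_Ioc hker
      _ = ∫⁻ s in Ioc δ 1, ∫⁻ x in Ioc δ 1,
            (Iio x).indicator (fun _ => (1:ℝ≥0∞)) s ∂μ ∂volume := hswap
      _ ≤ ∫⁻ s in Ioc δ 1, ENNReal.ofReal (f s) := by
          apply lintegral_mono_ae
          filter_upwards [ae_restrict_mem measurableSet_Ioc] with s hs
          have hfe : (fun x => (Iio x).indicator (fun _ => (1:ℝ≥0∞)) s)
              = (Ioi s).indicator (fun _ => (1:ℝ≥0∞)) := by
            funext x
            simp [Set.indicator_apply]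
          rw [hfe, lintegral_indicator measurableSet_Ioi,
            Measure.restrict_restrict measurableSet_Ioi]
          have hset : Ioi s ∩ Ioc δ 1 = Ioc s 1 := by
            ext x
            constructor
            · rintro ⟨h1, h2, h3⟩; exact ⟨h1, h3⟩
            · rintro ⟨h1, h2⟩; exact ⟨h1, hs.1.trans h1, h2⟩
          rw [hset, setLIntegral_one, hμ s 1 hs.1.le hs.2 le_rfl]
          exact ENNReal.ofReal_le_ofReal (by linarith)
  refine le_trans (add_le_add hc h2) (le_of_eq ?_)
  have hor : ENNReal.ofReal (∫ x in Ioc δ 1, f x) = ∫⁻ s in Ioc δ 1, ENNReal.ofReal (f s) := by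
    apply ofReal_integral_eq_lintegral_ofReal hfint
    filter_upwards [ae_restrict_mem measurableSet_Ioc] with x hx
    exact hfnn x ⟨hδ0.trans hx.1, hx.2⟩
  rw [← hor, ← ENNReal.ofReal_add (by positivity) hintnn]

lemma key_integral (f : ℝ → ℝ) (δ : ℝ) (hδ0 : 0 < δ) (hδ1 : δ < 1)
    (hfnn : ∀ x ∈ Ioc (0:ℝ) 1, 0 ≤ f x)
    (hfint : IntegrableOn f (Ioc δ 1))
    (μ : Measure ℝ)
    (hμ : ∀ a b : ℝ, δ ≤ a → a ≤ b → b ≤ 1 → μ (Ioc a b) = ENNReal.ofReal (f a - f b)) :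
    ∫ x in Ioc δ 1, x ∂μ ≤ δ * f δ + ∫ x in Ioc δ 1, f x := by
  have hfδ : 0 ≤ f δ := hfnn δ ⟨hδ0, hδ1.le⟩
  have hintnn : 0 ≤ ∫ x in Ioc δ 1, f x :=
    setIntegral_nonneg measurableSet_Ioc fun x hx => hfnn x ⟨hδ0.trans hx.1, hx.2⟩
  have hnn : (0:ℝ) ≤ δ * f δ + ∫ x in Ioc δ 1, f x := by positivity
  have hae : 0 ≤ᶠ[ae (μ.restrict (Ioc δ 1))] (fun x => x) := by
    filter_upwards [ae_restrict_mem measurableSet_Ioc] with x hx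
    exact (hδ0.trans hx.1).le
  have hmm : AEStronglyMeasurable (fun x : ℝ => x) (μ.restrict (Ioc δ 1)) :=
    measurable_id.aestronglyMeasurable
  rw [integral_eq_lintegral_of_nonneg_ae hae hmm]
  calc (∫⁻ x in Ioc δ 1, ENNReal.ofReal x ∂μ).toReal
        ≤ (ENNReal.ofReal (δ * f δ + ∫ x in Ioc δ 1, f x)).toReal :=
        ENNReal.toReal_mono ENNReal.ofReal_ne_top
          (key_lintegral f δ hδ0 hδ1 hfnn hfint μ hμ)
      _ = δ * f δ + ∫ x in Ioc δ 1, f x := ENNReal.toReal_ofReal hnn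

lemma one_side (f H : ℝ → ℝ) (M δ : ℝ) (hδ0 : 0 < δ) (hδ1 : δ < 1)
    (hfnn : ∀ x ∈ Ioc (0:ℝ) 1, 0 ≤ f x)
    (hfint : IntegrableOn f (Ioc δ 1))
    (μ : Measure ℝ)
    (hμ : ∀ a b : ℝ, δ ≤ a → a ≤ b → b ≤ 1 → μ (Ioc a b) = ENNReal.ofReal (f a - f b))
    (hHmeas : AEStronglyMeasurable H (μ.restrict (Ioc δ 1)))
    (hHle : ∀ x ∈ Ioc δ 1, |H x| ≤ M * x) :
    |∫ x in Ioc δ 1, H x ∂μ| ≤ M * (δ * f δ + ∫ x in Ioc δ 1, f x) := by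
  have hM0 : 0 ≤ M := by
    have := hHle 1 ⟨hδ1, le_rfl⟩
    nlinarith [abs_nonneg (H 1)]
  have hfin : μ (Ioc δ 1) ≠ ⊤ := by
    rw [hμ δ 1 le_rfl hδ1.le le_rfl]; exact ENNReal.ofReal_ne_top
  haveI : IsFiniteMeasure (μ.restrict (Ioc δ 1)) :=
    ⟨by rw [Measure.restrict_apply_univ]; exact lt_top_iff_ne_top.2 hfin⟩
  have hHint : Integrable H (μ.restrict (Ioc δ 1)) := by
    apply Integrable.mono' (integrable_const M) hHmeas
    filter_upwards [ae_restrict_mem measurableSet_Ioc] with x hx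
    rw [Real.norm_eq_abs]
    calc |H x| ≤ M * x := hHle x hx
      _ ≤ M * 1 := by nlinarith [hx.2]
      _ = M := mul_one M
  have hxint : Integrable (fun x => x) (μ.restrict (Ioc δ 1)) := by
    apply Integrable.mono' (integrable_const 1) measurable_id.aestronglyMeasurable
    filter_upwards [ae_restrict_mem measurableSet_Ioc] with x hx
    rw [Real.norm_eq_abs, id_eq, abs_of_pos (hδ0.trans hx.1)]
    exact hx.2
  calc |∫ x in Ioc δ 1, H x ∂μ| ≤ ∫ x in Ioc δ 1, ‖H x‖ ∂μ := by
        rw [← Real.norm_eq_abs]; exact norm_integral_le_integral_norm H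
    _ ≤ ∫ x in Ioc δ 1, M * x ∂μ := by
        apply integral_mono_ae hHint.norm (hxint.const_mul M)
        filter_upwards [ae_restrict_mem measurableSet_Ioc] with x hx
        rw [Real.norm_eq_abs]; exact hHle x hx
    _ = M * ∫ x in Ioc δ 1, x ∂μ := integral_const_mul M _
    _ ≤ M * (δ * f δ + ∫ x in Ioc δ 1, f x) :=
        mul_le_mul_of_nonneg_left (key_integral f δ hδ0 hδ1 hfnn hfint μ hμ) hM0

/-- **Bound (2.16).** For two right-continuous nonincreasing probability densities `f`, `g`
on `[0,1]` with CDFs `F`, `G`, writing `Ĝ = G − F` and `δ ∈ (0,1)`, one has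
`|∫_δ¹ x·Ĝ(x) dĝ(x)| ≤ sup_{0≤x≤1} |Ĝ(x)| · [δ·(g(δ)+f(δ)) + ∫_δ¹ (g(x)+f(x)) dx]`,
where the signed Lebesgue–Stieltjes measure `dĝ = d(−f) − d(−g)` is encoded by the two measures
`μf`, `μg` with `μf (a,b] = f a − f b` and `μg (a,b] = g a − g b` on `[δ,1]`. -/
theorem grenander_stieltjes_term_bound
    (f g F G : ℝ → ℝ) (δ : ℝ) (hδ : δ ∈ Ioo (0:ℝ) 1)
    (hfnn : ∀ x ∈ Ioc (0:ℝ) 1, 0 ≤ f x)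
    (hfanti : AntitoneOn f (Ioc 0 1))
    (hfrc : ∀ x ∈ Ioo (0:ℝ) 1, ContinuousWithinAt f (Ici x) x)
    (hfint : IntegrableOn f (Ioc 0 1))
    (hftot : ∫ x in Ioc (0:ℝ) 1, f x = 1)
    (hgnn : ∀ x ∈ Ioc (0:ℝ) 1, 0 ≤ g x)
    (hganti : AntitoneOn g (Ioc 0 1))
    (hgrc : ∀ x ∈ Ioo (0:ℝ) 1, ContinuousWithinAt g (Ici x) x)
    (hgint : IntegrableOn g (Ioc 0 1))
    (hgtot : ∫ x in Ioc (0:ℝ) 1, g x = 1)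
    (hF : ∀ x, F x = ∫ y in (0:ℝ)..x, f y)
    (hG : ∀ x, G x = ∫ y in (0:ℝ)..x, g y)
    (μf μg : Measure ℝ)
    (hμf : ∀ a b : ℝ, δ ≤ a → a ≤ b → b ≤ 1 → μf (Ioc a b) = ENNReal.ofReal (f a - f b))
    (hμg : ∀ a b : ℝ, δ ≤ a → a ≤ b → b ≤ 1 → μg (Ioc a b) = ENNReal.ofReal (g a - g b)) :
    |(∫ x in Ioc δ 1, x * (G x - F x) ∂μf) - ∫ x in Ioc δ 1, x * (G x - F x) ∂μg|
      ≤ (⨆ x : Icc (0:ℝ) 1, |G x.1 - F x.1|)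
        * (δ * (g δ + f δ) + ∫ x in Ioc δ 1, (g x + f x)) := by
  obtain ⟨hδ0, hδ1⟩ := hδ
  set M := (⨆ x : Icc (0:ℝ) 1, |G x.1 - F x.1|) with hMdef
  -- continuity of F and G on [0,1]
  have hficc : IntegrableOn f (Icc 0 1) := (integrableOn_Icc_iff_integrableOn_Ioc (by simp)).2 hfint
  have hgicc : IntegrableOn g (Icc 0 1) := (integrableOn_Icc_iff_integrableOn_Ioc (by simp)).2 hgint
  have hFcont : ContinuousOn F (Icc 0 1) :=
    (intervalIntegral.continuousOn_primitive hficc).congr fun x hx => by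
      rw [hF x, intervalIntegral.integral_of_le hx.1]
  have hGcont : ContinuousOn G (Icc 0 1) :=
    (intervalIntegral.continuousOn_primitive hgicc).congr fun x hx => by
      rw [hG x, intervalIntegral.integral_of_le hx.1]
  have hsub : Ioc δ 1 ⊆ Icc (0:ℝ) 1 := fun x hx => ⟨(hδ0.trans hx.1).le, hx.2⟩
  have hHcont : ContinuousOn (fun x => x * (G x - F x)) (Ioc δ 1) :=
    (continuousOn_id.mul (hGcont.sub hFcont)).mono hsub
  -- sup bound
  have hbdd : BddAbove (range fun x : Icc (0:ℝ) 1 => |G x.1 - F x.1|) := by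
    rw [show (fun x : Icc (0:ℝ) 1 => |G x.1 - F x.1|)
        = (Icc (0:ℝ) 1).domRestrict (fun y => |G y - F y|) from rfl, Set.range_domRestrict]
    exact isCompact_Icc.bddAbove_image ((hGcont.sub hFcont).abs)
  have hMle : ∀ x ∈ Icc (0:ℝ) 1, |G x - F x| ≤ M := fun x hx =>
    le_ciSup hbdd (⟨x, hx⟩ : Icc (0:ℝ) 1)
  have hHle : ∀ x ∈ Ioc δ 1, |x * (G x - F x)| ≤ M * x := by
    intro x hx
    rw [abs_mul, abs_of_pos (hδ0.trans hx.1), mul_comm]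
    exact mul_le_mul_of_nonneg_right (hMle x (hsub hx)) (hδ0.trans hx.1).le
  have hss : Ioc δ 1 ⊆ Ioc (0:ℝ) 1 := Ioc_subset_Ioc hδ0.le le_rfl
  have hbf := one_side f (fun x => x * (G x - F x)) M δ hδ0 hδ1 hfnn (hfint.mono_set hss)
    μf hμf (hHcont.aestronglyMeasurable measurableSet_Ioc) hHle
  have hbg := one_side g (fun x => x * (G x - F x)) M δ hδ0 hδ1 hgnn (hgint.mono_set hss)
    μg hμg (hHcont.aestronglyMeasurable measurableSet_Ioc) hHle
  have hadd : ∫ x in Ioc δ 1, (g x + f x)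
      = (∫ x in Ioc δ 1, g x) + ∫ x in Ioc δ 1, f x :=
    integral_add (hgint.mono_set hss) (hfint.mono_set hss)
  calc |(∫ x in Ioc δ 1, x * (G x - F x) ∂μf) - ∫ x in Ioc δ 1, x * (G x - F x) ∂μg|
      ≤ |∫ x in Ioc δ 1, x * (G x - F x) ∂μf| + |∫ x in Ioc δ 1, x * (G x - F x) ∂μg| :=
        abs_sub _ _
    _ ≤ M * (δ * f δ + ∫ x in Ioc δ 1, f x) + M * (δ * g δ + ∫ x in Ioc δ 1, g x) :=
        add_le_add hbf hbg
    _ = M * (δ * (g δ + f δ) + ∫ x in Ioc δ 1, (g x + f x)) := by rw [hadd]; ring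
end

section
/- Marshall's lemma: Let F : [0,1] → ℝ be concave and let h : [0,1] → ℝ be a bounded function whose least concave majorant ĥ (the pointwise infimum of all concave functions on [0,1] dominating h) is finite. Then sup_{0 ≤ x ≤ 1} |ĥ(x) − F(x)| ≤ sup_{0 ≤ x ≤ 1} |h(x) − F(x)|. -/
open MeasureTheory Set Filter

/-- The least concave majorant of `h` on `[0,1]`: the pointwise infimum of all functions that
are concave on `[0,1]` and dominate `h` there. -/
noncomputable def leastConcaveMajorant (h : ℝ → ℝ) (x : ℝ) : ℝ :=
  sInf { y : ℝ | ∃ c : ℝ → ℝ, ConcaveOn ℝ (Icc 0 1) c ∧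
    (∀ z ∈ Icc (0:ℝ) 1, h z ≤ c z) ∧ y = c x }

/-- **Marshall's lemma (inequality (2.19)).** If `F` is concave on `[0,1]` and `h` is bounded
on `[0,1]`, then the least concave majorant `ĥ` of `h` satisfies
`sup_{0≤x≤1} |ĥ(x) − F(x)| ≤ sup_{0≤x≤1} |h(x) − F(x)|`. -/
theorem marshall_lemma
    (F h : ℝ → ℝ)
    (hF : ConcaveOn ℝ (Icc 0 1) F)
    (hb : ∃ M : ℝ, ∀ x ∈ Icc (0:ℝ) 1, |h x| ≤ M) :
    (⨆ x : Icc (0:ℝ) 1, |leastConcaveMajorant h x.1 - F x.1|)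
      ≤ ⨆ x : Icc (0:ℝ) 1, |h x.1 - F x.1| := by
  obtain ⟨M, hM⟩ := hb
  haveI : Nonempty ↥(Icc (0:ℝ) 1) := ⟨⟨0, by norm_num⟩⟩
  -- lower bound for the concave F on [0,1]
  have hF0 : ∀ x ∈ Icc (0:ℝ) 1, min (F 0) (F 1) ≤ F x := by
    intro x hx
    have h2 := hF.2 (show (0:ℝ) ∈ Icc (0:ℝ) 1 by norm_num)
      (show (1:ℝ) ∈ Icc (0:ℝ) 1 by norm_num)
      (show (0:ℝ) ≤ 1 - x by linarith [hx.2]) hx.1 (by ring)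
    simp only [smul_eq_mul, mul_zero, mul_one, zero_add] at h2
    have h3 := min_le_left (F 0) (F 1)
    have h4 := min_le_right (F 0) (F 1)
    nlinarith [hx.1, hx.2, mul_le_mul_of_nonneg_left h3 (show (0:ℝ) ≤ 1 - x by linarith [hx.2]),
      mul_le_mul_of_nonneg_left h4 hx.1]
  -- upper bound for the concave F on [0,1]
  have hF1 : ∀ x ∈ Icc (0:ℝ) 1, F x ≤ 2 * F (1/2) - min (F 0) (F 1) := by
    intro x hx
    have hx' : 1 - x ∈ Icc (0:ℝ) 1 := ⟨by linarith [hx.2], by linarith [hx.1]⟩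
    have h2 := hF.2 hx hx' (by norm_num : (0:ℝ) ≤ 1/2) (by norm_num : (0:ℝ) ≤ 1/2)
      (by norm_num)
    simp only [smul_eq_mul] at h2
    have heq : (1/2 : ℝ) * x + (1/2 : ℝ) * (1 - x) = 1/2 := by ring
    rw [heq] at h2
    have h3 := hF0 (1 - x) hx'
    linarith
  set K : ℝ := max |2 * F (1/2) - min (F 0) (F 1)| |min (F 0) (F 1)| with hK
  have hFabs : ∀ x ∈ Icc (0:ℝ) 1, |F x| ≤ K := by
    intro x hx
    rw [abs_le]
    constructor
    · have := neg_abs_le (min (F 0) (F 1))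
      have h4 := le_max_right |2 * F (1/2) - min (F 0) (F 1)| |min (F 0) (F 1)|
      have := hF0 x hx
      simp only [← hK] at h4
      linarith
    · have := le_abs_self (2 * F (1/2) - min (F 0) (F 1))
      have h4 := le_max_left |2 * F (1/2) - min (F 0) (F 1)| |min (F 0) (F 1)|
      have := hF1 x hx
      simp only [← hK] at h4
      linarith
  -- bounded above, so the sup is an honest sup
  have hbdd : BddAbove (range fun x : Icc (0:ℝ) 1 => |h x.1 - F x.1|) := by
    refine ⟨M + K, ?_⟩
    rintro y ⟨x, rfl⟩
    have h1 := hM x.1 x.2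
    have h2 := hFabs x.1 x.2
    calc |h x.1 - F x.1| ≤ |h x.1| + |F x.1| := abs_sub _ _
      _ ≤ M + K := add_le_add h1 h2
  set S : ℝ := ⨆ x : Icc (0:ℝ) 1, |h x.1 - F x.1| with hS
  have hle : ∀ x ∈ Icc (0:ℝ) 1, |h x - F x| ≤ S := by
    intro x hx
    exact le_ciSup hbdd ⟨x, hx⟩
  -- F + S is a concave majorant of h on [0,1]
  have hFS : ConcaveOn ℝ (Icc (0:ℝ) 1) (fun z => F z + S) :=
    hF.add (concaveOn_const S (convex_Icc 0 1))
  have hmaj : ∀ z ∈ Icc (0:ℝ) 1, h z ≤ F z + S := by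
    intro z hz
    have := (abs_le.1 (hle z hz)).2
    linarith
  -- the least concave majorant is squeezed
  have hupper : ∀ x ∈ Icc (0:ℝ) 1, leastConcaveMajorant h x ≤ F x + S := by
    intro x hx
    refine csInf_le ⟨h x, ?_⟩ ⟨fun z => F z + S, hFS, hmaj, rfl⟩
    rintro y ⟨c, hc, hdom, rfl⟩
    exact hdom x hx
  have hlower : ∀ x ∈ Icc (0:ℝ) 1, h x ≤ leastConcaveMajorant h x := by
    intro x hx
    refine le_csInf ⟨F x + S, fun z => F z + S, hFS, hmaj, rfl⟩ ?_
    rintro y ⟨c, hc, hdom, rfl⟩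
    exact hdom x hx
  refine ciSup_le fun x => abs_le.2 ⟨?_, ?_⟩
  · have h1 := hlower x.1 x.2
    have h2 := (abs_le.1 (hle x.1 x.2)).1
    linarith
  · have h1 := hupper x.1 x.2
    linarith
end

section
/- Consistency of the Grenander estimator in weighted integrated square distance: Let X₁, X₂, … be an infinite i.i.d. sequence with values in [0,1] whose common law has a right-continuous nonincreasing density f on [0,1], and for each n let f̂ₙ(x−) be the Grenander estimator built from X₁, …, Xₙ (the left derivative of the least concave majorant of the empirical distribution function Fₙ). Then, with probability one, ∫₀¹ (f̂ₙ(x−) − f(x))²·x dx → 0 as n → ∞. -/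
open MeasureTheory Set Filter
open scoped ENNReal

/-- The empirical distribution function of the first `n` observations of the sequence `X`:
`Fₙ(x) = n⁻¹ · #{i < n : Xᵢ ≤ x}`. -/
noncomputable def empiricalCDF {Ω : Type*} (X : ℕ → Ω → ℝ) (n : ℕ) (ω : Ω) (x : ℝ) : ℝ :=
  (n : ℝ)⁻¹ * ((Finset.range n).filter fun i => X i ω ≤ x).card

/-- The Grenander estimator `f̂ₙ(x−)` built from the first `n` observations: the left derivative
of the least concave majorant of the empirical distribution function. -/
noncomputable def grenanderEstimator {Ω : Type*} (X : ℕ → Ω → ℝ) (n : ℕ) (ω : Ω) (x : ℝ) : ℝ :=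
  derivWithin (leastConcaveMajorant (empiricalCDF X n ω)) (Iio x) x

namespace GrenanderAux


/-- secant through `a` is antitone for a concave function -/
lemma secant_anti {s : Set ℝ} {c : ℝ → ℝ} (hc : ConcaveOn ℝ s c) {a x y : ℝ}
    (ha : a ∈ s) (hx : x ∈ s) (hy : y ∈ s) (hxa : x ≠ a) (hya : y ≠ a) (hxy : x ≤ y) :
    (c y - c a) / (y - a) ≤ (c x - c a) / (x - a) := by
  have := hc.neg.secant_mono ha hx hy hxa hya hxy
  simp only [Pi.neg_apply] at this
  have h1 : (-c x - -c a) / (x - a) = -((c x - c a) / (x - a)) := by ring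
  have h2 : (-c y - -c a) / (y - a) = -((c y - c a) / (y - a)) := by ring
  rw [h1, h2, neg_le_neg_iff] at this
  exact this

variable {h : ℝ → ℝ}

def majorantSet (h : ℝ → ℝ) (x : ℝ) : Set ℝ :=
  { y : ℝ | ∃ c : ℝ → ℝ, ConcaveOn ℝ (Icc 0 1) c ∧
    (∀ z ∈ Icc (0:ℝ) 1, h z ≤ c z) ∧ y = c x }

lemma lcm_eq (x : ℝ) : leastConcaveMajorant h x = sInf (majorantSet h x) := rfl

lemma majorantSet_nonempty (h1 : ∀ z ∈ Icc (0:ℝ) 1, h z ≤ 1) (x : ℝ) :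
    (majorantSet h x).Nonempty :=
  ⟨1, fun _ => 1, concaveOn_const 1 (convex_Icc 0 1), fun z hz => h1 z hz, rfl⟩

lemma majorantSet_bddBelow {x : ℝ} (hx : x ∈ Icc (0:ℝ) 1) :
    h x ∈ lowerBounds (majorantSet h x) := by
  rintro y ⟨c, _, hcm, rfl⟩
  exact hcm x hx

lemma le_lcm (h1 : ∀ z ∈ Icc (0:ℝ) 1, h z ≤ 1) {x : ℝ} (hx : x ∈ Icc (0:ℝ) 1) :
    h x ≤ leastConcaveMajorant h x :=
  le_csInf (majorantSet_nonempty h1 x) (majorantSet_bddBelow hx)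

lemma lcm_le_majorant {x : ℝ} (hx : x ∈ Icc (0:ℝ) 1) {c : ℝ → ℝ}
    (hc : ConcaveOn ℝ (Icc 0 1) c) (hcm : ∀ z ∈ Icc (0:ℝ) 1, h z ≤ c z) :
    leastConcaveMajorant h x ≤ c x :=
  csInf_le ⟨h x, majorantSet_bddBelow hx⟩ ⟨c, hc, hcm, rfl⟩

lemma lcm_le_one (h1 : ∀ z ∈ Icc (0:ℝ) 1, h z ≤ 1) {x : ℝ} (hx : x ∈ Icc (0:ℝ) 1) :
    leastConcaveMajorant h x ≤ 1 :=
  lcm_le_majorant hx (concaveOn_const 1 (convex_Icc 0 1)) h1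

lemma lcm_nonneg (h1 : ∀ z ∈ Icc (0:ℝ) 1, h z ≤ 1) (h0 : ∀ z ∈ Icc (0:ℝ) 1, 0 ≤ h z)
    {x : ℝ} (hx : x ∈ Icc (0:ℝ) 1) : 0 ≤ leastConcaveMajorant h x :=
  (h0 x hx).trans (le_lcm h1 hx)

lemma lcm_concave (h1 : ∀ z ∈ Icc (0:ℝ) 1, h z ≤ 1) :
    ConcaveOn ℝ (Icc 0 1) (leastConcaveMajorant h) := by
  refine ⟨convex_Icc 0 1, fun x hx y hy a b ha hb hab => ?_⟩
  refine le_csInf (majorantSet_nonempty h1 _) ?_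
  rintro w ⟨c, hc, hcm, rfl⟩
  have h1' := lcm_le_majorant hx hc hcm
  have h2' := lcm_le_majorant hy hc hcm
  calc a • leastConcaveMajorant h x + b • leastConcaveMajorant h y
      ≤ a • c x + b • c y := by
        simp only [smul_eq_mul]
        gcongr
    _ ≤ c (a • x + b • y) := hc.2 hx hy ha hb hab

lemma lcm_monotone (hm : MonotoneOn h (Icc 0 1)) (h1 : ∀ z ∈ Icc (0:ℝ) 1, h z ≤ 1) :
    MonotoneOn (leastConcaveMajorant h) (Icc 0 1) := by
  intro x hx y hy hxy
  rcases eq_or_lt_of_le hxy with rfl | hlt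
  · exact le_rfl
  refine le_csInf (majorantSet_nonempty h1 _) ?_
  rintro w ⟨c, hc, hcm, rfl⟩
  -- find a concave majorant whose value at x is ≤ c y
  rcases eq_or_lt_of_le hy.2 with rfl | hy1
  · -- y = 1 : use the constant c 1
    refine lcm_le_majorant hx (concaveOn_const _ (convex_Icc 0 1)) fun z hz => ?_
    exact (hm hz (right_mem_Icc.2 zero_le_one) hz.2).trans (hcm _ (right_mem_Icc.2 zero_le_one))
  · -- y < 1 : support line at y
    have hy0 : (0:ℝ) < y := lt_of_le_of_lt hx.1 hlt
    have hyI : y ∈ Icc (0:ℝ) 1 := hy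
    set T : Set ℝ := (fun z => (c z - c y) / (z - y)) '' Ioc y 1 with hT
    have hTne : T.Nonempty := ⟨_, 1, ⟨hy1, le_rfl⟩, rfl⟩
    have hTbdd : BddAbove T := by
      refine ⟨(c 0 - c y) / (0 - y), ?_⟩
      rintro t ⟨u, hu, rfl⟩
      have hu1 : u ∈ Icc (0:ℝ) 1 := ⟨(hy0.trans hu.1).le, hu.2⟩
      exact secant_anti hc hyI (left_mem_Icc.2 zero_le_one) hu1 hy0.ne
        (ne_of_gt hu.1) ((hy0.trans hu.1).le)
    set d : ℝ := sSup T with hd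
    have hsupp : ∀ z ∈ Icc (0:ℝ) 1, c z ≤ c y + d * (z - y) := by
      intro z hz
      rcases lt_trichotomy z y with hzy | rfl | hzy
      · -- z < y : (c z - c y)/(z - y) ≥ every element of T
        have hge : d ≤ (c z - c y) / (z - y) := by
          refine csSup_le hTne ?_
          rintro t ⟨u, hu, rfl⟩
          have hu1 : u ∈ Icc (0:ℝ) 1 := ⟨(hy0.trans hu.1).le, hu.2⟩
          exact secant_anti hc hyI hz hu1 (ne_of_lt hzy) (ne_of_gt hu.1) (hzy.le.trans hu.1.le)
        have hzy' : z - y < 0 := by linarith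
        have := mul_le_mul_of_nonpos_right hge hzy'.le
        rw [div_mul_cancel₀ _ hzy'.ne] at this
        linarith
      · simp
      · have hle : (c z - c y) / (z - y) ≤ d := le_csSup hTbdd ⟨z, ⟨hzy, hz.2⟩, rfl⟩
        have hzy' : (0:ℝ) < z - y := by linarith
        have := mul_le_mul_of_nonneg_right hle hzy'.le
        rw [div_mul_cancel₀ _ hzy'.ne'] at this
        linarith
    rcases le_or_gt 0 d with hd0 | hd0
    · -- use the affine function z ↦ c y + d*(z-y)
      have haff : ConcaveOn ℝ (Icc 0 1) (fun z => c y + d * (z - y)) := by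
        refine ⟨convex_Icc 0 1, fun u _ v _ a b ha hb hab => ?_⟩
        simp only [smul_eq_mul]
        have : a * (c y + d * (u - y)) + b * (c y + d * (v - y))
            = c y + d * ((a * u + b * v) - y) := by
          have : a = 1 - b := by linarith
          subst this; ring
        linarith [this.le]
      have := lcm_le_majorant hx haff fun z hz => (hcm z hz).trans (hsupp z hz)
      have hval : c y + d * (x - y) ≤ c y := by nlinarith
      linarith
    · -- use the constant c y
      refine lcm_le_majorant hx (concaveOn_const _ (convex_Icc 0 1)) fun z hz => ?_
      rcases le_or_gt z y with hzy | hzy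
      · exact (hm hz hyI hzy).trans (hcm _ hyI)
      · have := hsupp z hz
        nlinarith [hcm z hz]

/-- left derivative of a concave monotone function on [0,1] -/
noncomputable def leftD (g : ℝ → ℝ) (x : ℝ) : ℝ :=
  sInf ((fun y => (g y - g x) / (y - x)) '' Ioo 0 x)

variable {g : ℝ → ℝ} {x : ℝ}

lemma slope_image_nonempty (hx : 0 < x) :
    ((fun y => (g y - g x) / (y - x)) '' Ioo 0 x).Nonempty :=
  ⟨_, x/2, ⟨by linarith, by linarith⟩, rfl⟩

lemma slope_nonneg_of_monotone (hg : MonotoneOn g (Icc 0 1)) (hx : x ∈ Ioc (0:ℝ) 1)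
    {y : ℝ} (hy : y ∈ Ioo 0 x) : 0 ≤ (g y - g x) / (y - x) := by
  have hyI : y ∈ Icc (0:ℝ) 1 := ⟨hy.1.le, hy.2.le.trans hx.2⟩
  have hxI : x ∈ Icc (0:ℝ) 1 := ⟨hx.1.le, hx.2⟩
  have h1 : g y ≤ g x := hg hyI hxI hy.2.le
  have h2 : y - x < 0 := by linarith [hy.2]
  rw [div_nonneg_iff]; right; exact ⟨by linarith, h2.le⟩

lemma slope_bddBelow (hg : MonotoneOn g (Icc 0 1)) (hx : x ∈ Ioc (0:ℝ) 1) :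
    0 ∈ lowerBounds ((fun y => (g y - g x) / (y - x)) '' Ioo 0 x) := by
  rintro t ⟨y, hy, rfl⟩
  exact slope_nonneg_of_monotone hg hx hy

lemma leftD_nonneg (hg : MonotoneOn g (Icc 0 1)) (hx : x ∈ Ioc (0:ℝ) 1) :
    0 ≤ leftD g x :=
  le_csInf (slope_image_nonempty hx.1) (slope_bddBelow hg hx)

lemma leftD_le_slope (hg : MonotoneOn g (Icc 0 1)) (hx : x ∈ Ioc (0:ℝ) 1)
    {y : ℝ} (hy : y ∈ Ioo 0 x) : leftD g x ≤ (g y - g x) / (y - x) :=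
  csInf_le ⟨0, slope_bddBelow hg hx⟩ ⟨y, hy, rfl⟩

/-- the left derivative is at most the slope from 0 -/
lemma leftD_le_slope_zero (hc : ConcaveOn ℝ (Icc 0 1) g) (hg : MonotoneOn g (Icc 0 1))
    (hx : x ∈ Ioc (0:ℝ) 1) : leftD g x ≤ (g x - g 0) / x := by
  have hx2 : x/2 ∈ Ioo (0:ℝ) x := ⟨by linarith [hx.1], by linarith [hx.1]⟩
  refine (leftD_le_slope hg hx hx2).trans ?_
  have h := secant_anti hc (x := (0:ℝ)) (y := x/2) (a := x)
    ⟨hx.1.le, hx.2⟩ ⟨le_rfl, by linarith [hx.1, hx.2]⟩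
    ⟨by linarith [hx.1], by linarith [hx.1, hx.2]⟩ hx.1.ne (by intro hh; linarith [hx.1]) (by linarith [hx.1])
  calc (g (x/2) - g x) / (x/2 - x) ≤ (g 0 - g x) / (0 - x) := h
    _ = (g x - g 0) / x := by rw [show (0:ℝ) - x = -x by ring, div_neg, ← neg_div]; ring_nf

lemma slope_le_leftD (hc : ConcaveOn ℝ (Icc 0 1) g) (hg : MonotoneOn g (Icc 0 1))
    (hx : x ∈ Ioc (0:ℝ) 1) {v : ℝ} (hv : v ∈ Ioc x 1) :
    (g v - g x) / (v - x) ≤ leftD g x := by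
  refine le_csInf (slope_image_nonempty hx.1) ?_
  rintro t ⟨y, hy, rfl⟩
  exact secant_anti hc ⟨hx.1.le, hx.2⟩ ⟨hy.1.le, hy.2.le.trans hx.2⟩
    ⟨(hx.1.trans hv.1).le, hv.2⟩ hy.2.ne (ne_of_gt hv.1) (hy.2.le.trans hv.1.le)

lemma leftD_antitone (hc : ConcaveOn ℝ (Icc 0 1) g) (hg : MonotoneOn g (Icc 0 1)) :
    AntitoneOn (leftD g) (Ioc 0 1) := by
  intro x hx y hy hxy
  rcases eq_or_lt_of_le hxy with rfl | hlt
  · exact le_rfl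
  calc leftD g y ≤ (g x - g y) / (x - y) := leftD_le_slope hg hy ⟨hx.1, hlt⟩
    _ = (g y - g x) / (y - x) := by
        rw [show g x - g y = -(g y - g x) by ring, show x - y = -(y - x) by ring, neg_div_neg_eq]
    _ ≤ leftD g x := slope_le_leftD hc hg hx ⟨hlt, hy.2⟩

lemma hasDerivWithinAt_leftD (hc : ConcaveOn ℝ (Icc 0 1) g) (hg : MonotoneOn g (Icc 0 1))
    (hx : x ∈ Ioc (0:ℝ) 1) : HasDerivWithinAt g (leftD g x) (Iio x) x := by
  rw [hasDerivWithinAt_iff_tendsto_slope]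
  have hdiff : Iio x \ {x} = Iio x := diff_singleton_eq_self (by simp)
  rw [hdiff]
  have hanti : AntitoneOn (slope g x) (Ioo 0 x) := by
    intro u hu v hv huv
    rw [slope_def_field, slope_def_field]
    exact secant_anti hc ⟨hx.1.le, hx.2⟩ ⟨hu.1.le, hu.2.le.trans hx.2⟩
      ⟨hv.1.le, hv.2.le.trans hx.2⟩ hu.2.ne hv.2.ne huv
  have hbdd : BddBelow (slope g x '' Ioo 0 x) := by
    refine ⟨0, ?_⟩
    rintro t ⟨y, hy, rfl⟩
    rw [slope_def_field]
    exact slope_nonneg_of_monotone hg hx hy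
  have := hanti.tendsto_nhdsWithin_Ioo_left ⟨x/2, by constructor <;> linarith [hx.1]⟩ hbdd
  have himg : sInf (slope g x '' Ioo 0 x) = leftD g x := by
    unfold leftD
    congr 1
    ext t
    simp only [mem_image]
    constructor
    · rintro ⟨y, hy, rfl⟩; exact ⟨y, hy, by rw [slope_def_field]⟩
    · rintro ⟨y, hy, rfl⟩; exact ⟨y, hy, by rw [slope_def_field]⟩
  rw [himg] at this
  exact this

lemma derivWithin_eq_leftD (hc : ConcaveOn ℝ (Icc 0 1) g) (hg : MonotoneOn g (Icc 0 1))
    (hx : x ∈ Ioc (0:ℝ) 1) : derivWithin g (Iio x) x = leftD g x :=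
  (hasDerivWithinAt_leftD hc hg hx).derivWithin (uniqueDiffWithinAt_Iio x)



variable {f : ℝ → ℝ}

noncomputable def Fcdf (f : ℝ → ℝ) (x : ℝ) : ℝ := ∫ y in Ioc (0:ℝ) x, f y

lemma Fcdf_zero : Fcdf f 0 = 0 := by simp [Fcdf]

lemma Fcdf_mono (hnn : ∀ x ∈ Ioc (0:ℝ) 1, 0 ≤ f x) (hint : IntegrableOn f (Ioc 0 1)) :
    MonotoneOn (Fcdf f) (Icc 0 1) := by
  intro u hu v hv huv
  refine setIntegral_mono_set (hint.mono_set (Ioc_subset_Ioc le_rfl hv.2)) ?_ ?_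
  · rw [EventuallyLE, ae_restrict_iff' measurableSet_Ioc]
    exact Eventually.of_forall fun y hy => hnn y ⟨hy.1, hy.2.trans hv.2⟩
  · exact HasSubset.Subset.eventuallyLE (Ioc_subset_Ioc le_rfl huv)

lemma Fcdf_nonneg (hnn : ∀ x ∈ Ioc (0:ℝ) 1, 0 ≤ f x) (hint : IntegrableOn f (Ioc 0 1))
    {x : ℝ} (hx : x ∈ Icc (0:ℝ) 1) : 0 ≤ Fcdf f x := by
  have := Fcdf_mono hnn hint (left_mem_Icc.2 zero_le_one) hx hx.1
  rwa [Fcdf_zero] at this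

lemma Fcdf_le_one (hnn : ∀ x ∈ Ioc (0:ℝ) 1, 0 ≤ f x) (hint : IntegrableOn f (Ioc 0 1))
    (htot : ∫ x in Ioc (0:ℝ) 1, f x = 1) {x : ℝ} (hx : x ∈ Icc (0:ℝ) 1) :
    Fcdf f x ≤ 1 := by
  have := Fcdf_mono hnn hint hx (right_mem_Icc.2 zero_le_one) hx.2
  rwa [show Fcdf f 1 = 1 from htot] at this

lemma Fcdf_continuousOn (hint : IntegrableOn f (Ioc 0 1)) :
    ContinuousOn (Fcdf f) (Icc 0 1) := by
  have : IntegrableOn f (Icc 0 1) := by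
    rwa [integrableOn_Icc_iff_integrableOn_Ioc]
  exact intervalIntegral.continuousOn_primitive this

/-- additivity: for 0 ≤ u ≤ v ≤ 1, F v - F u = ∫ over Ioc u v -/
lemma Fcdf_diff (hint : IntegrableOn f (Ioc 0 1)) {u v : ℝ} (hu : 0 ≤ u) (huv : u ≤ v)
    (hv : v ≤ 1) : Fcdf f v - Fcdf f u = ∫ y in Ioc u v, f y := by
  have hsplit : Ioc (0:ℝ) v = Ioc 0 u ∪ Ioc u v := (Ioc_union_Ioc_eq_Ioc hu huv).symm
  have hdisj : Disjoint (Ioc (0:ℝ) u) (Ioc u v) := Ioc_disjoint_Ioc_of_le le_rfl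
  have h1 : IntegrableOn f (Ioc 0 u) := hint.mono_set (Ioc_subset_Ioc le_rfl (huv.trans hv))
  have h2 : IntegrableOn f (Ioc u v) := hint.mono_set (Ioc_subset_Ioc hu hv)
  rw [Fcdf, hsplit, setIntegral_union hdisj measurableSet_Ioc h1 h2]
  simp [Fcdf]

lemma integral_Ioc_le_const (hnn : ∀ x ∈ Ioc (0:ℝ) 1, 0 ≤ f x)
    (hanti : AntitoneOn f (Ioc 0 1)) (hint : IntegrableOn f (Ioc 0 1))
    {u v : ℝ} (hu : 0 ≤ u) (huv : u < v) (hv : v ≤ 1) {c : ℝ}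
    (hc : ∀ y ∈ Ioc u v, f y ≤ c) : ∫ y in Ioc u v, f y ≤ c * (v - u) := by
  have h2 : IntegrableOn f (Ioc u v) := hint.mono_set (Ioc_subset_Ioc hu hv)
  calc ∫ y in Ioc u v, f y ≤ ∫ _ in Ioc u v, c :=
        setIntegral_mono_on h2 (integrableOn_const (by simp) (by simp))
          measurableSet_Ioc hc
    _ = c * (v - u) := by
        rw [setIntegral_const, smul_eq_mul, measureReal_def, Real.volume_Ioc,
          ENNReal.toReal_ofReal (by linarith), mul_comm]

lemma const_le_integral_Ioc (hint : IntegrableOn f (Ioc 0 1))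
    {u v : ℝ} (hu : 0 ≤ u) (huv : u < v) (hv : v ≤ 1) {c : ℝ}
    (hc : ∀ y ∈ Ioc u v, c ≤ f y) : c * (v - u) ≤ ∫ y in Ioc u v, f y := by
  have h2 : IntegrableOn f (Ioc u v) := hint.mono_set (Ioc_subset_Ioc hu hv)
  calc c * (v - u) = ∫ _ in Ioc u v, c := by
        rw [setIntegral_const, smul_eq_mul, measureReal_def, Real.volume_Ioc,
          ENNReal.toReal_ofReal (by linarith), mul_comm]
    _ ≤ ∫ y in Ioc u v, f y :=
        setIntegral_mono_on (integrableOn_const (by simp) (by simp)) h2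
          measurableSet_Ioc hc

lemma Fcdf_concave (hnn : ∀ x ∈ Ioc (0:ℝ) 1, 0 ≤ f x) (hanti : AntitoneOn f (Ioc 0 1))
    (hint : IntegrableOn f (Ioc 0 1)) : ConcaveOn ℝ (Icc 0 1) (Fcdf f) := by
  refine concaveOn_of_slope_anti_adjacent (convex_Icc 0 1) ?_
  intro x y z hx hz hxy hyz
  have hy : y ∈ Ioo (0:ℝ) 1 := ⟨lt_of_le_of_lt hx.1 hxy, lt_of_lt_of_le hyz hz.2⟩
  have h1 : Fcdf f z - Fcdf f y = ∫ t in Ioc y z, f t :=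
    Fcdf_diff hint hy.1.le hyz.le hz.2
  have h2 : Fcdf f y - Fcdf f x = ∫ t in Ioc x y, f t :=
    Fcdf_diff hint hx.1 hxy.le hy.2.le
  have hupper : ∫ t in Ioc y z, f t ≤ f y * (z - y) := by
    refine integral_Ioc_le_const hnn hanti hint hy.1.le hyz hz.2 fun t ht => ?_
    exact hanti ⟨hy.1, hy.2.le⟩ ⟨hy.1.trans ht.1, ht.2.trans hz.2⟩ ht.1.le
  have hlower : f y * (y - x) ≤ ∫ t in Ioc x y, f t := by
    refine const_le_integral_Ioc hint hx.1 hxy hy.2.le fun t ht => ?_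
    exact hanti ⟨lt_of_le_of_lt hx.1 ht.1, ht.2.trans hy.2.le⟩ ⟨hy.1, hy.2.le⟩ ht.2
  rw [h1, h2] at *
  rw [div_le_div_iff₀ (by linarith) (by linarith)]
  nlinarith [hupper, hlower]

lemma mul_self_le_Fcdf (hnn : ∀ x ∈ Ioc (0:ℝ) 1, 0 ≤ f x) (hanti : AntitoneOn f (Ioc 0 1))
    (hint : IntegrableOn f (Ioc 0 1)) {x : ℝ} (hx : x ∈ Ioc (0:ℝ) 1) :
    f x * x ≤ Fcdf f x := by
  have h := const_le_integral_Ioc hint le_rfl hx.1 hx.2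
    (c := f x) (fun y hy => hanti ⟨hy.1, hy.2.trans hx.2⟩ hx hy.2)
  rw [sub_zero] at h
  exact le_of_eq_of_le rfl (le_trans (le_of_eq rfl) h)

/-- the set of points of `Ioo 0 1` where `f` is not continuous is countable -/
lemma countable_discont (hanti : AntitoneOn f (Ioc 0 1)) :
    ∃ S : Set ℝ, S.Countable ∧ ∀ x ∈ Ioo (0:ℝ) 1, x ∉ S → ContinuousAt f x := by
  classical
  -- clamped versions
  let θ : ℕ → ℝ := fun k => 1 / (k + 2)
  have hθpos : ∀ k, 0 < θ k := fun k => by positivity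
  have hθlt : ∀ k : ℕ, θ k < 1 := fun k => by
    rw [div_lt_one (by positivity)]
    have : (1:ℝ) < (k:ℝ) + 2 := by
      have : (0:ℝ) ≤ (k:ℝ) := Nat.cast_nonneg k
      linarith
    linarith
  let g : ℕ → ℝ → ℝ := fun k x => f (max (θ k) (min 1 x))
  have hganti : ∀ k, Antitone (g k) := by
    intro k x y hxy
    have h1 : max (θ k) (min 1 x) ∈ Ioc (0:ℝ) 1 :=
      ⟨lt_of_lt_of_le (hθpos k) (le_max_left _ _),
        max_le (hθlt k).le (min_le_left _ _)⟩
    have h2 : max (θ k) (min 1 y) ∈ Ioc (0:ℝ) 1 :=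
      ⟨lt_of_lt_of_le (hθpos k) (le_max_left _ _),
        max_le (hθlt k).le (min_le_left _ _)⟩
    exact hanti h1 h2 (max_le_max le_rfl (min_le_min le_rfl hxy))
  set S : Set ℝ := ⋃ k : ℕ, {x | ¬ContinuousAt (g k) x} with hS
  refine ⟨S, countable_iUnion fun k => (hganti k).countable_not_continuousAt, ?_⟩
  intro x hx hxS
  obtain ⟨k, hk⟩ : ∃ k : ℕ, θ k < x := by
    obtain ⟨n, hn⟩ := exists_nat_gt (1 / x)
    refine ⟨n, ?_⟩
    rw [div_lt_iff₀ (by positivity)]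
    rw [div_lt_iff₀ hx.1] at hn
    nlinarith [hx.1]
  have hgc : ContinuousAt (g k) x := by
    by_contra hcon
    exact hxS (mem_iUnion.2 ⟨k, hcon⟩)
  have heq : f =ᶠ[nhds x] g k := by
    have hmem : Ioo (θ k) 1 ∈ nhds x := Ioo_mem_nhds hk hx.2
    filter_upwards [hmem] with z hz
    simp only [g]
    rw [min_eq_right hz.2.le, max_eq_right hz.1.le]
  exact ContinuousAt.congr hgc heq.symm

/-- FTC at interior continuity points -/
lemma hasDerivAt_Fcdf (hint : IntegrableOn f (Ioc 0 1)) {x : ℝ} (hx : x ∈ Ioo (0:ℝ) 1)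
    (hcont : ContinuousAt f x) : HasDerivAt (Fcdf f) (f x) x := by
  have hii : IntervalIntegrable f volume 0 x := by
    rw [intervalIntegrable_iff_integrableOn_Ioc_of_le hx.1.le]
    exact hint.mono_set (Ioc_subset_Ioc le_rfl hx.2.le)
  have hmeas : StronglyMeasurableAtFilter f (nhds x) volume := by
    refine ⟨Ioo 0 1, Ioo_mem_nhds hx.1 hx.2, ?_⟩
    exact hint.aestronglyMeasurable.mono_measure
      (Measure.restrict_mono Ioo_subset_Ioc_self le_rfl)
  have h := intervalIntegral.integral_hasDerivAt_right hii hmeas hcont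
  refine h.congr_of_eventuallyEq ?_
  filter_upwards [Ioo_mem_nhds hx.1 hx.2] with z hz
  rw [Fcdf, intervalIntegral.integral_of_le hz.1.le]

/-- helper: convergence from eventual ε-closeness -/
lemma tendsto_of_forall_eventually_abs_le {a : ℕ → ℝ} {L : ℝ}
    (h : ∀ ε > (0:ℝ), ∀ᶠ n in atTop, |a n - L| ≤ ε) : Tendsto a atTop (nhds L) := by
  rw [Metric.tendsto_atTop]
  intro ε hε
  obtain ⟨N, hN⟩ := (h (ε/2) (by linarith)).exists_forall_of_atTop
  exact ⟨N, fun n hn => by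
    have := hN n hn
    rw [Real.dist_eq]
    linarith⟩



lemma lintegral_leftD_le {g : ℝ → ℝ} (hc : ConcaveOn ℝ (Icc 0 1) g) (hg : MonotoneOn g (Icc 0 1))
    (hg0 : ∀ z ∈ Icc (0:ℝ) 1, 0 ≤ g z) {b : ℝ} (hb : b ∈ Ioc (0:ℝ) 1) :
    ∫⁻ x in Ioc (0:ℝ) b, ENNReal.ofReal (leftD g x) ≤ ENNReal.ofReal (2 * g b) := by
  set a : ℕ → ℝ := fun k => b / 2 ^ (k + 1) with ha
  have hapos : ∀ k, 0 < a k := fun k => div_pos hb.1 (by positivity)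
  have haleb : ∀ k, a k ≤ b := fun k => by
    rw [ha]; exact div_le_self hb.1.le (one_le_pow₀ one_le_two)
  have haI : ∀ k, a k ∈ Ioc (0:ℝ) 1 := fun k => ⟨hapos k, (haleb k).trans hb.2⟩
  have haIcc : ∀ k, a k ∈ Icc (0:ℝ) 1 := fun k => ⟨(hapos k).le, (haleb k).trans hb.2⟩
  have hahalf : ∀ k, a (k + 1) = a k / 2 := by
    intro k
    rw [ha]
    simp only
    rw [pow_succ]
    ring
  have h2a : ∀ k, 2 * a k = b / 2 ^ k := by
    intro k
    rw [ha]
    simp only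
    rw [pow_succ]
    ring
  have h2aI : ∀ k, 2 * a k ≤ b := by
    intro k
    rw [h2a]
    exact div_le_self hb.1.le (one_le_pow₀ one_le_two)
  -- cover
  have hcover : Ioc (0:ℝ) b ⊆ ⋃ k : ℕ, Ioc (a k) (2 * a k) := by
    intro x hx
    have hexists : ∃ k : ℕ, b / 2 ^ (k + 1) < x := by
      obtain ⟨n, hn⟩ := pow_unbounded_of_one_lt (b / x) (one_lt_two (α := ℝ))
      refine ⟨n, ?_⟩
      have hx0 : 0 < x := hx.1
      rw [div_lt_iff₀ hx0] at hn
      rw [div_lt_iff₀ (by positivity : (0:ℝ) < (2:ℝ) ^ (n+1)), pow_succ]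
      nlinarith [pow_pos (zero_lt_two (α := ℝ)) n]
    classical
    set k := Nat.find hexists with hk
    have h1 : a k < x := Nat.find_spec hexists
    have h2 : x ≤ 2 * a k := by
      rw [h2a]
      rcases Nat.eq_zero_or_pos k with hk0 | hk0
      · rw [hk0]; simpa using hx.2
      · have hmin := Nat.find_min hexists (m := k - 1) (by omega)
        push_neg at hmin
        have hkk : k - 1 + 1 = k := by omega
        rwa [hkk] at hmin
    exact mem_iUnion.2 ⟨k, h1, h2⟩
  calc ∫⁻ x in Ioc (0:ℝ) b, ENNReal.ofReal (leftD g x)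
      ≤ ∫⁻ x in ⋃ k : ℕ, Ioc (a k) (2 * a k), ENNReal.ofReal (leftD g x) :=
        lintegral_mono_set hcover
    _ ≤ ∑' k : ℕ, ∫⁻ x in Ioc (a k) (2 * a k), ENNReal.ofReal (leftD g x) :=
        lintegral_iUnion_le _ _
    _ ≤ ∑' k : ℕ, ENNReal.ofReal (2 * (g (a k) - g (a (k + 1)))) := by
        refine ENNReal.tsum_le_tsum fun k => ?_
        have hBk : ∀ x ∈ Ioc (a k) (2 * a k),
            ENNReal.ofReal (leftD g x) ≤
              ENNReal.ofReal ((g (a (k+1)) - g (a k)) / (a (k+1) - a k)) := by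
          intro x hx
          refine ENNReal.ofReal_le_ofReal ?_
          have hxI : x ∈ Ioc (0:ℝ) 1 :=
            ⟨(hapos k).trans hx.1, hx.2.trans ((h2aI k).trans hb.2)⟩
          have h1 : leftD g x ≤ leftD g (a k) :=
            leftD_antitone hc hg (haI k) hxI hx.1.le
          have h2 : leftD g (a k) ≤ (g (a (k+1)) - g (a k)) / (a (k+1) - a k) := by
            refine leftD_le_slope hg (haI k) ?_
            rw [hahalf k]
            exact ⟨by linarith [hapos k], by linarith [hapos k]⟩
          linarith
        calc ∫⁻ x in Ioc (a k) (2 * a k), ENNReal.ofReal (leftD g x)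
            ≤ ∫⁻ _ in Ioc (a k) (2 * a k),
                ENNReal.ofReal ((g (a (k+1)) - g (a k)) / (a (k+1) - a k)) :=
              setLIntegral_mono measurable_const hBk
          _ = ENNReal.ofReal ((g (a (k+1)) - g (a k)) / (a (k+1) - a k))
                * volume (Ioc (a k) (2 * a k)) := setLIntegral_const _ _
          _ = ENNReal.ofReal (2 * (g (a k) - g (a (k + 1)))) := by
              have key : ∀ u : ℝ, 0 < u →
                  (g (u/2) - g u) / (u/2 - u) * (2*u - u) = 2*(g u - g (u/2)) := by
                intro u hu
                have hne : u/2 - u ≠ 0 := by intro h; linarith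
                rw [div_mul_eq_mul_div, div_eq_iff hne]
                ring
              rw [Real.volume_Ioc,
                ← ENNReal.ofReal_mul' (by linarith [hapos k] : (0:ℝ) ≤ 2 * a k - a k)]
              congr 1
              rw [hahalf k]
              exact key (a k) (hapos k)
    _ ≤ ENNReal.ofReal (2 * g b) := by
        have hterm : ∀ k, 0 ≤ 2 * (g (a k) - g (a (k+1))) := by
          intro k
          have : g (a (k+1)) ≤ g (a k) := by
            refine hg (haIcc (k+1)) (haIcc k) ?_
            rw [hahalf k]; linarith [hapos k]
          linarith
        rw [ENNReal.tsum_eq_iSup_sum]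
        refine iSup_le fun s => ?_
        obtain ⟨K, hK⟩ : ∃ K, s ⊆ Finset.range K := ⟨(s.sup id) + 1, fun i hi =>
          Finset.mem_range.2 (Nat.lt_succ_of_le (Finset.le_sup (f := id) hi))⟩
        calc (∑ k ∈ s, ENNReal.ofReal (2 * (g (a k) - g (a (k+1)))))
            ≤ ∑ k ∈ Finset.range K, ENNReal.ofReal (2 * (g (a k) - g (a (k+1)))) :=
              Finset.sum_le_sum_of_subset hK
          _ = ENNReal.ofReal (∑ k ∈ Finset.range K, 2 * (g (a k) - g (a (k+1)))) :=
              (ENNReal.ofReal_sum_of_nonneg fun k _ => hterm k).symm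
          _ ≤ ENNReal.ofReal (2 * g b) := by
              refine ENNReal.ofReal_le_ofReal ?_
              have htel : ∑ k ∈ Finset.range K, (g (a k) - g (a (k+1)))
                  = g (a 0) - g (a K) := Finset.sum_range_sub' (fun k => g (a k)) K
              rw [← Finset.mul_sum, htel]
              have h1 : g (a 0) ≤ g b := hg (haIcc 0) ⟨hb.1.le, hb.2⟩ (haleb 0)
              have h2 : 0 ≤ g (a K) := hg0 _ (haIcc K)
              linarith



lemma tendsto_leftD {c : ℕ → ℝ → ℝ} {g : ℝ → ℝ} {x d : ℝ}
    (hc : ∀ n, ConcaveOn ℝ (Icc 0 1) (c n)) (hcm : ∀ n, MonotoneOn (c n) (Icc 0 1))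
    (hx : x ∈ Ioo (0:ℝ) 1)
    (hconv : ∀ z ∈ Icc (0:ℝ) 1, Tendsto (fun n => c n z) atTop (nhds (g z)))
    (hd : HasDerivAt g d x) :
    Tendsto (fun n => leftD (c n) x) atTop (nhds d) := by
  have hxIcc : x ∈ Icc (0:ℝ) 1 := ⟨hx.1.le, hx.2.le⟩
  have hslope := hasDerivAt_iff_tendsto_slope.mp hd
  refine tendsto_order.2 ⟨fun l hl => ?_, fun u' hu' => ?_⟩
  · -- eventually l < leftD (c n) x  : use point v > x
    have ev : ∀ᶠ y in nhdsWithin x {x}ᶜ, l < slope g x y :=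
      hslope.eventually_const_lt hl
    have ev' : ∀ᶠ y in nhdsWithin x (Ioi x), l < slope g x y :=
      ev.filter_mono (nhdsWithin_mono x fun y hy => ne_of_gt hy)
    have ev2 : Ioo x 1 ∈ nhdsWithin x (Ioi x) := Ioo_mem_nhdsGT hx.2
    obtain ⟨v, hv1, hv2⟩ := (ev'.and ev2).exists
    have hvIcc : v ∈ Icc (0:ℝ) 1 := ⟨(hx.1.trans hv2.1).le, hv2.2.le⟩
    have hs : Tendsto (fun n => (c n v - c n x) / (v - x)) atTop
        (nhds ((g v - g x) / (v - x))) :=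
      ((hconv v hvIcc).sub (hconv x hxIcc)).div_const _
    have hgv : l < (g v - g x) / (v - x) := by
      rw [slope_def_field] at hv1
      exact hv1
    filter_upwards [hs.eventually_const_lt hgv] with n hn
    exact lt_of_lt_of_le hn
      (slope_le_leftD (hc n) (hcm n) ⟨hx.1, hx.2.le⟩ ⟨hv2.1, hv2.2.le⟩)
  · -- eventually leftD (c n) x < u' : use point u < x
    have ev : ∀ᶠ y in nhdsWithin x {x}ᶜ, slope g x y < u' :=
      hslope.eventually_lt_const hu'
    have ev' : ∀ᶠ y in nhdsWithin x (Iio x), slope g x y < u' :=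
      ev.filter_mono (nhdsWithin_mono x fun y hy => ne_of_lt hy)
    have ev2 : Ioo 0 x ∈ nhdsWithin x (Iio x) := Ioo_mem_nhdsLT hx.1
    obtain ⟨u, hu1, hu2⟩ := (ev'.and ev2).exists
    have huIcc : u ∈ Icc (0:ℝ) 1 := ⟨hu2.1.le, (hu2.2.trans hx.2).le⟩
    have hs : Tendsto (fun n => (c n u - c n x) / (u - x)) atTop
        (nhds ((g u - g x) / (u - x))) :=
      ((hconv u huIcc).sub (hconv x hxIcc)).div_const _
    have hgu : (g u - g x) / (u - x) < u' := by
      rw [slope_def_field] at hu1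
      exact hu1
    filter_upwards [hs.eventually_lt_const hgu] with n hn
    exact lt_of_le_of_lt (leftD_le_slope (hcm n) ⟨hx.1, hx.2.le⟩ hu2) hn


lemma det (f : ℝ → ℝ)
    (hnn : ∀ x ∈ Ioc (0:ℝ) 1, 0 ≤ f x)
    (hanti : AntitoneOn f (Ioc 0 1))
    (hint : IntegrableOn f (Ioc 0 1))
    (htot : ∫ x in Ioc (0:ℝ) 1, f x = 1)
    (h : ℕ → ℝ → ℝ)
    (hm : ∀ n, MonotoneOn (h n) (Icc 0 1))
    (h0 : ∀ n, ∀ x ∈ Icc (0:ℝ) 1, 0 ≤ h n x)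
    (h1 : ∀ n, ∀ x ∈ Icc (0:ℝ) 1, h n x ≤ 1)
    (hconv : ∀ ε > (0:ℝ), ∀ᶠ n in atTop, ∀ x ∈ Icc (0:ℝ) 1, |h n x - Fcdf f x| ≤ ε) :
    Tendsto (fun n => ∫⁻ x in Ioc (0:ℝ) 1,
      ENNReal.ofReal ((derivWithin (leastConcaveMajorant (h n)) (Iio x) x - f x)^2 * x))
      atTop (nhds 0) := by
  set F : ℝ → ℝ := Fcdf f with hF
  set L : ℕ → ℝ → ℝ := fun n => leastConcaveMajorant (h n) with hL
  set D : ℕ → ℝ → ℝ := fun n => leftD (L n) with hD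
  have hLc : ∀ n, ConcaveOn ℝ (Icc 0 1) (L n) := fun n => lcm_concave (h1 n)
  have hLm : ∀ n, MonotoneOn (L n) (Icc 0 1) := fun n => lcm_monotone (hm n) (h1 n)
  have hL0 : ∀ n, ∀ z ∈ Icc (0:ℝ) 1, 0 ≤ L n z := fun n z hz => lcm_nonneg (h1 n) (h0 n) hz
  have hL1 : ∀ n, ∀ z ∈ Icc (0:ℝ) 1, L n z ≤ 1 := fun n z hz => lcm_le_one (h1 n) hz
  have hFc : ConcaveOn ℝ (Icc 0 1) F := Fcdf_concave hnn hanti hint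
  have hFm : MonotoneOn F (Icc 0 1) := Fcdf_mono hnn hint
  -- replace derivWithin by leftD
  have hIeq : ∀ n, (∫⁻ x in Ioc (0:ℝ) 1,
      ENNReal.ofReal ((derivWithin (leastConcaveMajorant (h n)) (Iio x) x - f x)^2 * x))
      = ∫⁻ x in Ioc (0:ℝ) 1, ENNReal.ofReal ((D n x - f x)^2 * x) := by
    intro n
    refine setLIntegral_congr_fun measurableSet_Ioc (fun x hx => ?_)
    rw [hD, hL]
    simp only
    rw [derivWithin_eq_leftD (hLc n) (hLm n) hx]
  simp only [hIeq]
  -- Marshall's lemma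
  have hMar : ∀ ε > (0:ℝ), ∀ᶠ n in atTop, ∀ x ∈ Icc (0:ℝ) 1, |L n x - F x| ≤ ε := by
    intro ε hε
    filter_upwards [hconv ε hε] with n hn
    intro x hx
    have hFε : ConcaveOn ℝ (Icc 0 1) (fun z => F z + ε) :=
      hFc.add (concaveOn_const ε (convex_Icc 0 1))
    have hup : L n x ≤ F x + ε := by
      refine lcm_le_majorant hx hFε fun z hz => ?_
      have hz' := hn z hz
      rw [abs_le] at hz'
      linarith [hz'.1]
    have hlow : F x - ε ≤ L n x := by
      have h2 := le_lcm (h1 n) hx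
      have hx' := hn x hx
      rw [abs_le] at hx'
      linarith [hx'.2]
    rw [abs_le]
    exact ⟨by linarith, by linarith⟩
  have hLtendsto : ∀ z ∈ Icc (0:ℝ) 1, Tendsto (fun n => L n z) atTop (nhds (F z)) :=
    fun z hz => tendsto_of_forall_eventually_abs_le
      (fun ε hε => (hMar ε hε).mono fun n hn => hn z hz)
  obtain ⟨S, hScount, hScont⟩ := countable_discont hanti
  rw [ENNReal.tendsto_nhds_zero]
  intro ε hε
  obtain ⟨δ, hδpos, hδε⟩ : ∃ δ : ℝ, 0 < δ ∧ ENNReal.ofReal δ ≤ ε := by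
    rcases eq_or_ne ε ⊤ with rfl | hεtop
    · exact ⟨1, one_pos, le_top⟩
    · refine ⟨ε.toReal, ENNReal.toReal_pos hε.ne' hεtop, ?_⟩
      rw [ENNReal.ofReal_toReal hεtop]
  set η : ℝ := min (δ / 36) 1 with hη
  have hηpos : 0 < η := lt_min (by linarith) one_pos
  have hηδ : η ≤ δ / 36 := min_le_left _ _
  have hη1 : η ≤ 1 := min_le_right _ _
  -- choose θ
  obtain ⟨θ, hθF, hθmem⟩ : ∃ θ : ℝ, F θ < η ∧ θ ∈ Ioc (0:ℝ) (1/2) := by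
    have hcw : ContinuousWithinAt F (Icc 0 1) 0 :=
      (Fcdf_continuousOn hint) 0 (left_mem_Icc.2 zero_le_one)
    have hsub : Ioc (0:ℝ) (1/2) ⊆ Icc 0 1 := fun z hz =>
      ⟨hz.1.le, hz.2.trans (by norm_num)⟩
    have htd : Tendsto F (nhdsWithin 0 (Ioc (0:ℝ) (1/2))) (nhds (F 0)) :=
      hcw.mono_left (nhdsWithin_mono 0 hsub)
    rw [show F 0 = 0 from Fcdf_zero] at htd
    haveI : (nhdsWithin (0:ℝ) (Ioc 0 (1/2))).NeBot := by
      refine mem_closure_iff_nhdsWithin_neBot.mp ?_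
      rw [closure_Ioc (by norm_num : (0:ℝ) ≠ 1/2)]
      exact left_mem_Icc.2 (by norm_num)
    exact ((htd.eventually_lt_const hηpos).and eventually_mem_nhdsWithin).exists
  have hθ0 : 0 < θ := hθmem.1
  have hθ1 : θ < 1 := lt_of_le_of_lt hθmem.2 (by norm_num)
  have hθIoc : θ ∈ Ioc (0:ℝ) 1 := ⟨hθ0, hθ1.le⟩
  have hθIcc : θ ∈ Icc (0:ℝ) 1 := ⟨hθ0.le, hθ1.le⟩
  -- pointwise bounds
  have hDbound : ∀ n, ∀ x ∈ Ioc (0:ℝ) 1, D n x ≤ 1 / x := by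
    intro n x hx
    have h2 := leftD_le_slope_zero (hLc n) (hLm n) hx
    have h3 : L n x - L n 0 ≤ 1 := by
      have ha := hL1 n x ⟨hx.1.le, hx.2⟩
      have hb := hL0 n 0 (left_mem_Icc.2 zero_le_one)
      linarith
    calc D n x ≤ (L n x - L n 0) / x := h2
      _ ≤ 1 / x := (div_le_div_iff_of_pos_right hx.1).mpr h3
  have hfbound : ∀ x ∈ Ioc (0:ℝ) 1, f x ≤ 1 / x := by
    intro x hx
    have h2 : f x * x ≤ F x := mul_self_le_Fcdf hnn hanti hint hx
    have h3 : F x ≤ 1 := Fcdf_le_one hnn hint htot ⟨hx.1.le, hx.2⟩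
    rw [le_div_iff₀ hx.1]
    linarith
  -- S2 : dominated convergence on Ioc θ 1
  have hS2 : Tendsto (fun n => ∫⁻ x in Ioc θ 1, ENNReal.ofReal ((D n x - f x)^2 * x))
      atTop (nhds 0) := by
    have h0eq : (0:ℝ≥0∞) = ∫⁻ _ in Ioc θ 1, (0:ℝ≥0∞) := by simp
    rw [h0eq]
    have hfmeas : AEMeasurable f (volume.restrict (Ioc θ 1)) :=
      hint.aestronglyMeasurable.aemeasurable.mono_measure
        (Measure.restrict_mono (Ioc_subset_Ioc hθ0.le le_rfl) le_rfl)
    refine tendsto_lintegral_of_dominated_convergence'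
      (fun _ => ENNReal.ofReal ((1/θ)^2)) (fun n => ?_) (fun n => ?_) ?_ ?_
    · have hDanti : AntitoneOn (D n) (Ioc θ 1) :=
        (leftD_antitone (hLc n) (hLm n)).mono (Ioc_subset_Ioc hθ0.le le_rfl)
      have hDmeas : AEMeasurable (D n) (volume.restrict (Ioc θ 1)) :=
        aemeasurable_restrict_of_antitoneOn measurableSet_Ioc hDanti
      exact ENNReal.measurable_ofReal.comp_aemeasurable
        (((hDmeas.sub hfmeas).pow_const 2).mul aemeasurable_id)
    · rw [EventuallyLE, ae_restrict_iff' measurableSet_Ioc]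
      refine Eventually.of_forall fun x hx => ?_
      have hxI : x ∈ Ioc (0:ℝ) 1 := ⟨hθ0.trans hx.1, hx.2⟩
      have hD0 : 0 ≤ D n x := leftD_nonneg (hLm n) hxI
      have hf0 : 0 ≤ f x := hnn x hxI
      have hinv : 1 / x ≤ 1 / θ := by
        rw [div_le_div_iff₀ hxI.1 hθ0]
        nlinarith [hx.1.le]
      have hDle : D n x ≤ 1/θ := (hDbound n x hxI).trans hinv
      have hfle : f x ≤ 1/θ := (hfbound x hxI).trans hinv
      refine ENNReal.ofReal_le_ofReal ?_
      have habs : (D n x - f x)^2 ≤ (1/θ)^2 := by nlinarith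
      nlinarith [sq_nonneg (D n x - f x), hxI.1.le, hxI.2]
    · rw [lintegral_const, Measure.restrict_apply_univ, Real.volume_Ioc]
      exact ENNReal.mul_ne_top ENNReal.ofReal_ne_top ENNReal.ofReal_ne_top
    · have h1ae : ∀ᵐ x ∂(volume.restrict (Ioc θ 1)), x ∈ Ioc θ 1 :=
        ae_restrict_mem measurableSet_Ioc
      have h2ae : ∀ᵐ x ∂(volume.restrict (Ioc θ 1)), x ≠ (1:ℝ) := by
        rw [ae_iff]
        have hsub : {x : ℝ | ¬ x ≠ 1} ⊆ ({1} : Set ℝ) := fun x hx => by simpa using hx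
        refine le_antisymm ((measure_mono hsub).trans ?_) (by positivity)
        refine (Measure.restrict_apply_le _ _).trans ?_
        simp
      have h3ae : ∀ᵐ x ∂(volume.restrict (Ioc θ 1)), x ∉ S := by
        rw [ae_iff]
        have hsub : {x : ℝ | ¬ x ∉ S} ⊆ S := fun x hx => by simpa using hx
        refine le_antisymm ((measure_mono hsub).trans ?_) (by positivity)
        exact (Measure.restrict_apply_le _ _).trans (le_of_eq (hScount.measure_zero _))
      filter_upwards [h1ae, h2ae, h3ae] with x hx1 hx2 hx3
      have hxIoo : x ∈ Ioo (0:ℝ) 1 := ⟨hθ0.trans hx1.1, lt_of_le_of_ne hx1.2 hx2⟩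
      have hct := hScont x hxIoo hx3
      have hder : HasDerivAt F (f x) x := hasDerivAt_Fcdf hint hxIoo hct
      have hDconv : Tendsto (fun n => D n x) atTop (nhds (f x)) :=
        tendsto_leftD hLc hLm hxIoo hLtendsto hder
      have hreal : Tendsto (fun n => (D n x - f x)^2 * x) atTop (nhds 0) := by
        have hsub : Tendsto (fun n => D n x - f x) atTop (nhds 0) := by
          simpa using hDconv.sub_const (f x)
        have hh : Tendsto (fun n => (D n x - f x) * (D n x - f x) * x) atTop
            (nhds (0 * 0 * x)) := (hsub.mul hsub).mul_const x
        simp only [pow_two]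
        simpa using hh
      have hh2 := ENNReal.tendsto_ofReal hreal
      simpa using hh2
  have hS2ev : ∀ᶠ n in atTop,
      (∫⁻ x in Ioc θ 1, ENNReal.ofReal ((D n x - f x)^2 * x)) ≤ ENNReal.ofReal (δ/2) :=
    (ENNReal.tendsto_nhds_zero.mp hS2) _ (ENNReal.ofReal_pos.mpr (by linarith))
  filter_upwards [hS2ev, hMar η hηpos] with n hn2 hn1
  -- S1 : bound on Ioc 0 θ
  have hS1 : (∫⁻ x in Ioc (0:ℝ) θ, ENNReal.ofReal ((D n x - f x)^2 * x))
      ≤ ENNReal.ofReal (δ/2) := by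
    set α : ℝ := F θ + η with hα
    have hα2 : α ≤ 2 * η := by
      have := hθF.le
      rw [hα]; linarith
    have hα0 : 0 ≤ α := by
      have := Fcdf_nonneg hnn hint hθIcc
      rw [hα]; linarith
    have hLθ : L n θ ≤ α := by
      have := hn1 θ hθIcc
      rw [abs_le] at this
      rw [hα]; linarith [this.1]
    have hpt : ∀ x ∈ Ioc (0:ℝ) θ,
        (D n x - f x)^2 * x ≤ 2*α * D n x + 2*η * f x := by
      intro x hx
      have hxI : x ∈ Ioc (0:ℝ) 1 := ⟨hx.1, hx.2.trans hθ1.le⟩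
      have hxIcc : x ∈ Icc (0:ℝ) 1 := ⟨hx.1.le, hx.2.trans hθ1.le⟩
      have hD0 : 0 ≤ D n x := leftD_nonneg (hLm n) hxI
      have hf0 : 0 ≤ f x := hnn x hxI
      have hDx : D n x * x ≤ α := by
        have h2 := leftD_le_slope_zero (hLc n) (hLm n) hxI
        have h3 : L n x ≤ F x + η := by
          have := hn1 x hxIcc
          rw [abs_le] at this
          linarith [this.1]
        have h4 : 0 ≤ L n 0 := hL0 n 0 (left_mem_Icc.2 zero_le_one)
        have h5 : F x ≤ F θ := hFm hxIcc hθIcc hx.2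
        have h6 : D n x * x ≤ L n x - L n 0 := (le_div_iff₀ hxI.1).mp h2
        rw [hα]
        linarith
      have hfxη : f x * x ≤ η := by
        have h2 : f x * x ≤ F x := mul_self_le_Fcdf hnn hanti hint hxI
        have h5 : F x ≤ F θ := hFm hxIcc hθIcc hx.2
        linarith [hθF.le]
      have hA : D n x * (D n x * x) ≤ D n x * α := mul_le_mul_of_nonneg_left hDx hD0
      have hB : f x * (f x * x) ≤ f x * η := mul_le_mul_of_nonneg_left hfxη hf0
      have hC : 0 ≤ D n x * f x * x := mul_nonneg (mul_nonneg hD0 hf0) hx.1.le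
      nlinarith [mul_nonneg hα0 hD0, mul_nonneg hηpos.le hf0]
    have hDanti : AntitoneOn (D n) (Ioc 0 θ) :=
      (leftD_antitone (hLc n) (hLm n)).mono (Ioc_subset_Ioc le_rfl hθ1.le)
    have hDmeas : AEMeasurable (D n) (volume.restrict (Ioc 0 θ)) :=
      aemeasurable_restrict_of_antitoneOn measurableSet_Ioc hDanti
    have hg1meas : AEMeasurable (fun x => ENNReal.ofReal (2*α * D n x))
        (volume.restrict (Ioc 0 θ)) :=
      ENNReal.measurable_ofReal.comp_aemeasurable (hDmeas.const_mul (2*α))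
    have hintθ : IntegrableOn f (Ioc 0 θ) := hint.mono_set (Ioc_subset_Ioc le_rfl hθ1.le)
    have hfae : 0 ≤ᵐ[volume.restrict (Ioc 0 θ)] f := by
      rw [EventuallyLE, ae_restrict_iff' measurableSet_Ioc]
      exact Eventually.of_forall fun x hx => hnn x ⟨hx.1, hx.2.trans hθ1.le⟩
    calc (∫⁻ x in Ioc (0:ℝ) θ, ENNReal.ofReal ((D n x - f x)^2 * x))
        ≤ ∫⁻ x in Ioc (0:ℝ) θ,
            (ENNReal.ofReal (2*α * D n x) + ENNReal.ofReal (2*η * f x)) := by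
          refine lintegral_mono_ae ?_
          rw [ae_restrict_iff' measurableSet_Ioc]
          refine Eventually.of_forall fun x hx => ?_
          calc ENNReal.ofReal ((D n x - f x)^2 * x)
              ≤ ENNReal.ofReal (2*α * D n x + 2*η * f x) :=
                ENNReal.ofReal_le_ofReal (hpt x hx)
            _ ≤ _ := ENNReal.ofReal_add_le
      _ = (∫⁻ x in Ioc (0:ℝ) θ, ENNReal.ofReal (2*α * D n x))
            + ∫⁻ x in Ioc (0:ℝ) θ, ENNReal.ofReal (2*η * f x) :=
          lintegral_add_left' hg1meas _
      _ ≤ ENNReal.ofReal (2*α) * ENNReal.ofReal (2 * α)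
            + ENNReal.ofReal (2*η) * ENNReal.ofReal η := by
          refine add_le_add ?_ ?_
          · have heq : ∀ x : ℝ, ENNReal.ofReal (2*α * D n x)
                = ENNReal.ofReal (2*α) * ENNReal.ofReal (D n x) := fun x =>
              ENNReal.ofReal_mul (by positivity)
            simp_rw [heq]
            rw [lintegral_const_mul' _ _ ENNReal.ofReal_ne_top]
            refine mul_le_mul' le_rfl ?_
            calc (∫⁻ x in Ioc (0:ℝ) θ, ENNReal.ofReal (D n x))
                ≤ ENNReal.ofReal (2 * L n θ) :=
                  lintegral_leftD_le (hLc n) (hLm n) (hL0 n) hθIoc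
              _ ≤ ENNReal.ofReal (2 * α) := by
                  refine ENNReal.ofReal_le_ofReal ?_
                  linarith
          · have heq : ∀ x : ℝ, ENNReal.ofReal (2*η * f x)
                = ENNReal.ofReal (2*η) * ENNReal.ofReal (f x) := fun x =>
              ENNReal.ofReal_mul (by positivity)
            simp_rw [heq]
            rw [lintegral_const_mul' _ _ ENNReal.ofReal_ne_top]
            refine mul_le_mul' le_rfl ?_
            have hFθ : (∫⁻ x in Ioc (0:ℝ) θ, ENNReal.ofReal (f x))
                = ENNReal.ofReal (F θ) :=
              (ofReal_integral_eq_lintegral_ofReal hintθ hfae).symm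
            rw [hFθ]
            exact ENNReal.ofReal_le_ofReal hθF.le
      _ ≤ ENNReal.ofReal (δ/2) := by
          rw [← ENNReal.ofReal_mul (by positivity), ← ENNReal.ofReal_mul (by positivity),
            ← ENNReal.ofReal_add (by positivity) (by positivity)]
          refine ENNReal.ofReal_le_ofReal ?_
          nlinarith
  calc (∫⁻ x in Ioc (0:ℝ) 1, ENNReal.ofReal ((D n x - f x)^2 * x))
      = ∫⁻ x in Ioc (0:ℝ) θ ∪ Ioc θ 1, ENNReal.ofReal ((D n x - f x)^2 * x) := by
        rw [Ioc_union_Ioc_eq_Ioc hθ0.le hθ1.le]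
    _ ≤ (∫⁻ x in Ioc (0:ℝ) θ, ENNReal.ofReal ((D n x - f x)^2 * x))
          + ∫⁻ x in Ioc θ 1, ENNReal.ofReal ((D n x - f x)^2 * x) :=
        lintegral_union_le _ _ _
    _ ≤ ENNReal.ofReal (δ/2) + ENNReal.ofReal (δ/2) := add_le_add hS1 hn2
    _ = ENNReal.ofReal δ := by
        rw [← ENNReal.ofReal_add (by linarith) (by linarith)]
        norm_num
    _ ≤ ε := hδε

-- ===================== probability part =====================

lemma empirical_monotone {Ω : Type*} (X : ℕ → Ω → ℝ) (n : ℕ) (ω : Ω) :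
    Monotone (empiricalCDF X n ω) := by
  intro x y hxy
  unfold empiricalCDF
  have hsub : (Finset.range n).filter (fun i => X i ω ≤ x)
      ⊆ (Finset.range n).filter (fun i => X i ω ≤ y) := fun i hi => by
    simp only [Finset.mem_filter] at hi ⊢
    exact ⟨hi.1, hi.2.trans hxy⟩
  have h2 : ((Finset.range n).filter (fun i => X i ω ≤ x)).card
      ≤ ((Finset.range n).filter (fun i => X i ω ≤ y)).card := Finset.card_le_card hsub
  exact mul_le_mul_of_nonneg_left (by exact_mod_cast h2) (by positivity)

lemma empirical_nonneg {Ω : Type*} (X : ℕ → Ω → ℝ) (n : ℕ) (ω : Ω) (x : ℝ) :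
    0 ≤ empiricalCDF X n ω x := by
  unfold empiricalCDF
  positivity

lemma empirical_le_one {Ω : Type*} (X : ℕ → Ω → ℝ) (n : ℕ) (ω : Ω) (x : ℝ) :
    empiricalCDF X n ω x ≤ 1 := by
  unfold empiricalCDF
  rcases Nat.eq_zero_or_pos n with rfl | hn
  · simp
  · have hcard : ((Finset.range n).filter (fun i => X i ω ≤ x)).card ≤ n := by
      calc _ ≤ (Finset.range n).card := Finset.card_filter_le _ _
        _ = n := Finset.card_range n
    have hn' : (0:ℝ) < n := by exact_mod_cast hn
    rw [inv_mul_le_iff₀ hn', mul_one]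
    exact_mod_cast hcard

open ProbabilityTheory in
lemma empirical_tendsto_ae
    {Ω : Type*} [MeasurableSpace Ω] (P : Measure Ω) [IsProbabilityMeasure P]
    (X : ℕ → Ω → ℝ)
    (hmeas : ∀ i, Measurable (X i))
    (hindep : ProbabilityTheory.iIndepFun X P)
    (f : ℝ → ℝ)
    (hnn : ∀ x ∈ Ioc (0:ℝ) 1, 0 ≤ f x)
    (hint : IntegrableOn f (Ioc 0 1))
    (hlaw : ∀ i, Measure.map (X i) P
      = (volume.restrict (Ioc 0 1)).withDensity fun x => ENNReal.ofReal (f x))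
    {q : ℝ} (hq : q ∈ Icc (0:ℝ) 1) :
    ∀ᵐ ω ∂P, Tendsto (fun n => empiricalCDF X n ω q) atTop (nhds (Fcdf f q)) := by
  classical
  set g : ℝ → ℝ := (Iic q).indicator (fun _ => 1) with hg
  have hgmeas : Measurable g := measurable_const.indicator measurableSet_Iic
  set Y : ℕ → Ω → ℝ := fun i ω => g (X i ω) with hY
  have hYmeas : ∀ i, Measurable (Y i) := fun i => hgmeas.comp (hmeas i)
  have hint0 : Integrable (Y 0) P := by
    refine (integrable_const (1:ℝ)).mono' (hYmeas 0).aestronglyMeasurable ?_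
    refine Eventually.of_forall fun ω => ?_
    rw [hY, hg]
    simp only [indicator]
    split <;> simp
  have hpind : Pairwise (Function.onFun (ProbabilityTheory.IndepFun · · P) Y) :=
    fun i j hij => (ProbabilityTheory.iIndepFun.indepFun hindep hij).comp hgmeas hgmeas
  have hident : ∀ i, IdentDistrib (Y i) (Y 0) P P := by
    intro i
    refine ⟨(hYmeas i).aemeasurable, (hYmeas 0).aemeasurable, ?_⟩
    show Measure.map (g ∘ X i) P = Measure.map (g ∘ X 0) P
    rw [← Measure.map_map hgmeas (hmeas i), ← Measure.map_map hgmeas (hmeas 0),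
      hlaw i, hlaw 0]
  have hintq : IntegrableOn f (Ioc 0 q) := hint.mono_set (Ioc_subset_Ioc le_rfl hq.2)
  have hnnq : 0 ≤ᵐ[volume.restrict (Ioc 0 q)] f := by
    rw [EventuallyLE, ae_restrict_iff' measurableSet_Ioc]
    exact Eventually.of_forall fun y hy => hnn y ⟨hy.1, hy.2.trans hq.2⟩
  have hFnonneg : 0 ≤ ∫ y in Ioc (0:ℝ) q, f y :=
    setIntegral_nonneg measurableSet_Ioc fun y hy => hnn y ⟨hy.1, hy.2.trans hq.2⟩
  have hexp : P[Y 0] = Fcdf f q := by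
    calc P[Y 0] = ∫ y, g y ∂(Measure.map (X 0) P) :=
          (integral_map (hmeas 0).aemeasurable hgmeas.aestronglyMeasurable).symm
      _ = ((Measure.map (X 0) P) (Iic q)).toReal := by
          rw [hg, integral_indicator_const (1:ℝ) measurableSet_Iic, smul_eq_mul, mul_one, measureReal_def]
      _ = (((volume.restrict (Ioc 0 1)).withDensity fun y => ENNReal.ofReal (f y))
            (Iic q)).toReal := by rw [hlaw 0]
      _ = (∫⁻ y in Ioc (0:ℝ) q, ENNReal.ofReal (f y)).toReal := by
          have hset : Iic q ∩ Ioc (0:ℝ) 1 = Ioc 0 q := by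
            ext z
            simp only [mem_inter_iff, mem_Iic, mem_Ioc]
            constructor
            · rintro ⟨h1, h2, _⟩; exact ⟨h2, h1⟩
            · rintro ⟨h1, h2⟩; exact ⟨h2, h1, h2.trans hq.2⟩
          rw [withDensity_apply _ measurableSet_Iic,
            Measure.restrict_restrict measurableSet_Iic, hset]
      _ = (ENNReal.ofReal (∫ y in Ioc (0:ℝ) q, f y)).toReal := by
          rw [ofReal_integral_eq_lintegral_ofReal hintq hnnq]
      _ = Fcdf f q := ENNReal.toReal_ofReal hFnonneg
  have hslln := ProbabilityTheory.strong_law_ae_real Y hint0 hpind hident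
  filter_upwards [hslln] with ω hω
  rw [hexp] at hω
  have hcard : (fun n => empiricalCDF X n ω q)
      = fun n => (∑ i ∈ Finset.range n, Y i ω) / n := by
    funext n
    unfold empiricalCDF
    rw [Finset.card_filter, inv_mul_eq_div]
    congr 1
    push_cast
    refine Finset.sum_congr rfl fun i _ => ?_
    rw [hY, hg]
    by_cases hle : X i ω ≤ q
    · simp [Set.indicator_of_mem, mem_Iic, hle]
    · simp [Set.indicator_of_notMem, mem_Iic, hle]
  rw [hcard]
  exact hω

end GrenanderAux

/-- **Consistency (equation (2.21)).** For an infinite i.i.d. sequence with values in `[0,1]`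
and right-continuous nonincreasing density `f`, the Grenander estimator is consistent in the
weighted integrated square distance: a.s. `∫₀¹ (f̂ₙ(x−) − f(x))²·x dx → 0` as `n → ∞`. -/
theorem grenander_consistency
    {Ω : Type*} [MeasurableSpace Ω] (P : Measure Ω) [IsProbabilityMeasure P]
    (X : ℕ → Ω → ℝ)
    (hmeas : ∀ i, Measurable (X i))
    (hrange : ∀ i ω, X i ω ∈ Icc (0:ℝ) 1)
    (hindep : ProbabilityTheory.iIndepFun X P)
    (f : ℝ → ℝ)
    (hnn : ∀ x ∈ Ioc (0:ℝ) 1, 0 ≤ f x)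
    (hanti : AntitoneOn f (Ioc 0 1))
    (hrc : ∀ x ∈ Ioo (0:ℝ) 1, ContinuousWithinAt f (Ici x) x)
    (hint : IntegrableOn f (Ioc 0 1))
    (htot : ∫ x in Ioc (0:ℝ) 1, f x = 1)
    (hlaw : ∀ i, Measure.map (X i) P
      = (volume.restrict (Ioc 0 1)).withDensity fun x => ENNReal.ofReal (f x)) :
    ∀ᵐ ω ∂P,
      Tendsto
        (fun n => ∫⁻ x in Ioc (0:ℝ) 1,
          ENNReal.ofReal ((grenanderEstimator X n ω x - f x) ^ 2 * x))
        atTop (nhds 0) := by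
    classical
  have hae : ∀ᵐ ω ∂P, ∀ q : ℚ, (q:ℝ) ∈ Icc (0:ℝ) 1 →
      Tendsto (fun n => empiricalCDF X n ω q) atTop (nhds (GrenanderAux.Fcdf f q)) := by
    rw [ae_all_iff]
    intro q
    by_cases hq : (q:ℝ) ∈ Icc (0:ℝ) 1
    · filter_upwards [GrenanderAux.empirical_tendsto_ae P X hmeas hindep f hnn hint hlaw hq]
        with ω hω _
      exact hω
    · filter_upwards with ω hq'
      exact absurd hq' hq
  filter_upwards [hae] with ω hω
  refine GrenanderAux.det f hnn hanti hint htot (fun n => empiricalCDF X n ω)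
    (fun n => (GrenanderAux.empirical_monotone X n ω).monotoneOn _)
    (fun n x _ => GrenanderAux.empirical_nonneg X n ω x)
    (fun n x _ => GrenanderAux.empirical_le_one X n ω x) ?_
  intro ε hε
  have hFcont : ContinuousOn (GrenanderAux.Fcdf f) (Icc 0 1) :=
    GrenanderAux.Fcdf_continuousOn hint
  obtain ⟨δ, hδpos, hδ⟩ := Metric.uniformContinuousOn_iff_le.1
    (isCompact_Icc.uniformContinuousOn_of_continuous hFcont) (ε/2) (by linarith)
  obtain ⟨m, hm⟩ : ∃ m : ℕ, 1 / ((m:ℝ) + 1) < δ := exists_nat_one_div_lt hδpos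
  set M : ℝ := (m:ℝ) + 1 with hM
  have hM0 : (0:ℝ) < M := by positivity
  have hM1 : (1:ℝ) ≤ M := by rw [hM]; have : (0:ℝ) ≤ (m:ℝ) := Nat.cast_nonneg m; linarith
  -- membership of grid points
  have hgridmem : ∀ j ∈ Finset.range (m + 2), (j:ℝ)/M ∈ Icc (0:ℝ) 1 := by
    intro j hj
    rw [Finset.mem_range] at hj
    have hj1 : (j:ℝ) ≤ M := by
      rw [hM]
      exact_mod_cast Nat.lt_succ_iff.mp hj
    exact ⟨by positivity, by rw [div_le_one hM0]; exact hj1⟩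
  -- convergence at grid points
  have hgrid : ∀ j ∈ Finset.range (m + 2),
      Tendsto (fun n => empiricalCDF X n ω ((j:ℝ)/M))
        atTop (nhds (GrenanderAux.Fcdf f ((j:ℝ)/M))) := by
    intro j hj
    have hcast : (((j:ℚ)/((m:ℚ)+1) : ℚ) : ℝ) = (j:ℝ)/M := by
      rw [hM]; push_cast; ring
    have hmem : (((j:ℚ)/((m:ℚ)+1) : ℚ) : ℝ) ∈ Icc (0:ℝ) 1 := by
      rw [hcast]; exact hgridmem j hj
    have := hω _ hmem
    rw [hcast] at this
    exact this
  have hev : ∀ᶠ n in atTop, ∀ j ∈ Finset.range (m + 2),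
      |empiricalCDF X n ω ((j:ℝ)/M) - GrenanderAux.Fcdf f ((j:ℝ)/M)| ≤ ε/2 := by
    rw [eventually_all_finset]
    intro j hj
    have hball := (hgrid j hj).eventually_mem
      (Metric.closedBall_mem_nhds _ (show (0:ℝ) < ε/2 by linarith))
    filter_upwards [hball] with n hn
    rw [Metric.mem_closedBall, Real.dist_eq] at hn
    exact hn
  filter_upwards [hev] with n hn
  intro x hx
  set j : ℕ := min ⌊x * M⌋₊ m with hj
  have hjm : j ≤ m := min_le_right _ _
  have hjr : j ∈ Finset.range (m+2) := Finset.mem_range.2 (by omega)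
  have hjr1 : j + 1 ∈ Finset.range (m+2) := Finset.mem_range.2 (by omega)
  have hu : (j:ℝ)/M ≤ x := by
    rw [div_le_iff₀ hM0]
    have h1 : (j:ℝ) ≤ (⌊x * M⌋₊ : ℝ) := by exact_mod_cast min_le_left ⌊x * M⌋₊ m
    have h2 : (⌊x * M⌋₊ : ℝ) ≤ x * M := Nat.floor_le (mul_nonneg hx.1 hM0.le)
    linarith
  have hv : x ≤ ((j:ℝ)+1)/M := by
    rw [le_div_iff₀ hM0]
    rcases le_or_gt ⌊x * M⌋₊ m with hfloor | hfloor
    · have hjeq : j = ⌊x * M⌋₊ := min_eq_left hfloor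
      have h3 := Nat.lt_floor_add_one (x * M)
      rw [hjeq]
      push_cast at h3 ⊢
      linarith
    · have hjeq : j = m := min_eq_right hfloor.le
      have hxM : x * M ≤ M := by nlinarith [hx.2]
      rw [hjeq, ← hM]
      exact hxM
  have humem : (j:ℝ)/M ∈ Icc (0:ℝ) 1 := hgridmem j hjr
  have hvmem : ((j:ℝ)+1)/M ∈ Icc (0:ℝ) 1 := by
    have := hgridmem (j+1) hjr1
    push_cast at this
    exact this
  have hgap : ((j:ℝ)+1)/M - (j:ℝ)/M = 1/M := by field_simp; ring
  have hδu : dist ((j:ℝ)/M) x ≤ δ := by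
    rw [Real.dist_eq, abs_le]
    constructor
    · have : x ≤ ((j:ℝ)+1)/M := hv
      have h1M : 1/M < δ := by rw [hM]; exact hm
      linarith
    · linarith
  have hδv : dist (((j:ℝ)+1)/M) x ≤ δ := by
    rw [Real.dist_eq, abs_le]
    have h1M : 1/M < δ := by rw [hM]; exact hm
    constructor
    · linarith
    · linarith
  have hFu : |GrenanderAux.Fcdf f ((j:ℝ)/M) - GrenanderAux.Fcdf f x| ≤ ε/2 := by
    have := hδ _ humem _ hx hδu
    rwa [Real.dist_eq] at this
  have hFv : |GrenanderAux.Fcdf f (((j:ℝ)+1)/M) - GrenanderAux.Fcdf f x| ≤ ε/2 := by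
    have := hδ _ hvmem _ hx hδv
    rwa [Real.dist_eq] at this
  have hnu := hn j hjr
  have hnv' := hn (j+1) hjr1
  have hnv : |empiricalCDF X n ω (((j:ℝ)+1)/M)
      - GrenanderAux.Fcdf f (((j:ℝ)+1)/M)| ≤ ε/2 := by
    push_cast at hnv'
    exact hnv'
  have hmono := GrenanderAux.empirical_monotone X n ω
  have hEu : empiricalCDF X n ω ((j:ℝ)/M) ≤ empiricalCDF X n ω x := hmono hu
  have hEv : empiricalCDF X n ω x ≤ empiricalCDF X n ω (((j:ℝ)+1)/M) := hmono hv
  rw [abs_le] at hnu hnv hFu hFv ⊢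
  constructor
  · linarith [hnu.1, hFu.2]
  · linarith [hnv.2, hFv.1]
end
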